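/- arXiv:1111.1471 — 6 statements merged into one kernel-verified Lean document; each statement's English description precedes it below -/
import Mathlib

section
/- For every integer N ≥ 1, the sequence l satisfies the exact formula l_N = ∑_{k=2}^{N} binom(N,k) (-1)^k Q_{k-2} ∑_{n=1}^{k-2} (1 - (n+1)·2^{-n} - n(n+1)/4)/Q_n. (For N ≥ 1 this gives the average number of 2-protected nodes in a random digital search tree built from N data.) -/
open Finset

/-- `Q m = ∏_{k=1}^m (1 - 2^{-k})`, with `Q 0 = 1`. -/
noncomputable def Q (m : ℕ) : ℝ := ∏ k ∈ Finset.Icc 1 m, (1 - (2:ℝ) ^ (-(k:ℤ)))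

noncomputable def cc (n : ℕ) : ℝ :=
  1 - ((n:ℝ)+1) * (2:ℝ) ^ (-(n:ℤ)) - (n:ℝ) * ((n:ℝ)+1) / 4
noncomputable def S (m : ℕ) : ℝ := ∑ n ∈ Finset.Icc 1 m, cc n / Q n
noncomputable def aa (k : ℕ) : ℝ := (-1)^k * Q (k-2) * S (k-2)
noncomputable def F (N : ℕ) : ℝ := ∑ k ∈ Finset.range (N+1), (N.choose k : ℝ) * aa k

lemma two_zpow_neg (k : ℕ) : (2:ℝ) ^ (-(k:ℤ)) = (2⁻¹:ℝ)^k := by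
  rw [zpow_neg, zpow_natCast, inv_pow]

lemma Q_pos (m : ℕ) : 0 < Q m := by
  apply Finset.prod_pos
  intro k hk
  rw [two_zpow_neg]
  have h1 : (2⁻¹:ℝ)^k < 1 := by
    apply pow_lt_one₀ (by norm_num) (by norm_num)
    exact Nat.one_le_iff_ne_zero.mp (Finset.mem_Icc.mp hk).1
  linarith

lemma Q_succ (m : ℕ) : Q (m+1) = Q m * (1 - (2:ℝ) ^ (-((m:ℤ)+1))) := by
  rw [Q, Q, Finset.prod_Icc_succ_top (by omega)]
  push_cast
  ring_nf

lemma S_succ (m : ℕ) : S (m+1) = S m + cc (m+1) / Q (m+1) := by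
  rw [S, S, Finset.sum_Icc_succ_top (by omega)]

lemma aa0 : aa 0 = 0 := by simp [aa, S]
lemma aa1 : aa 1 = 0 := by simp [aa, S]

lemma key (k : ℕ) :
    aa k + aa (k+1) - (2:ℝ)^(1-(k:ℤ)) * aa k = (-1)^(k+1) * cc (k-1) := by
  match k with
  | 0 => norm_num [aa, S, cc]
  | 1 => norm_num [aa, S, cc]
  | (m+2) =>
    have hQ : Q (m+1) ≠ 0 := (Q_pos _).ne'
    have h1 : (1:ℤ) - ((m:ℕ)+2:ℕ) = -((m:ℤ)+1) := by push_cast; ring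
    have h2 : aa (m+2) = (-1)^(m+2) * Q m * S m := rfl
    have h3 : aa (m+3) = (-1)^(m+3) * Q (m+1) * S (m+1) := rfl
    have h4 : ((m:ℕ)+2+1 : ℕ) = m+3 := rfl
    rw [h4, h2, h3, h1, S_succ]
    have h5 : ((m:ℕ)+2-1 : ℕ) = m+1 := rfl
    rw [h5]
    have e : (-1:ℝ)^(m+3) * Q (m+1) * (S m + cc (m+1)/Q (m+1))
        = (-1)^(m+3) * (Q (m+1) * S m + cc (m+1)) := by
      field_simp
    rw [e, Q_succ]
    ring

lemma trinom (n j : ℕ) (hj : j ≤ n) :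
    ∑ k ∈ range (n+1), n.choose k * k.choose j = n.choose j * 2^(n-j) := by
  have h1 : ∑ k ∈ range (n+1), n.choose k * k.choose j
      = ∑ k ∈ Icc j n, n.choose k * k.choose j := by
    symm
    apply Finset.sum_subset
    · intro k hk
      simp only [mem_Icc] at hk
      simp [Finset.mem_range]; omega
    · intro k hk hk'
      simp only [mem_Icc, mem_range] at hk hk'
      have : k < j := by omega
      simp [Nat.choose_eq_zero_of_lt this]
  rw [h1, ← Finset.Ico_add_one_right_eq_Icc, Finset.sum_Ico_eq_sum_range]
  have h2 : ∀ i ∈ range (n + 1 - j), n.choose (j+i) * (j+i).choose j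
      = n.choose j * (n-j).choose i := by
    intro i hi
    simp only [mem_range] at hi
    rw [Nat.choose_mul (show j ≤ j+i by omega)]
    congr 2
    omega
  rw [Finset.sum_congr rfl h2, ← Finset.mul_sum]
  have h3 : n + 1 - j = (n - j) + 1 := by omega
  rw [h3, Nat.sum_range_choose]

lemma alt_sum (x : ℝ) (n : ℕ) :
    ∑ k ∈ range (n+1), (n.choose k : ℝ) * x^k = (x+1)^n := by
  rw [add_pow]
  apply Finset.sum_congr rfl
  intro k hk
  ring

lemma B_id (m k : ℕ) :
    ((m:ℝ)+3) * ((m+2).choose k : ℝ) = ((m+3).choose (k+1) : ℝ) * ((k:ℝ)+1) := by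
  exact_mod_cast congrArg (Nat.cast (R := ℝ)) (Nat.add_one_mul_choose_eq (m+2) k)

lemma main_id (m : ℕ) :
    ∑ k ∈ range (m+3+1), ((m+3).choose k : ℝ) * ((-1)^(k+1) * cc (k-1))
      = 1 - ((m:ℝ)+3) * (2⁻¹:ℝ)^(m+2) := by
  have hA : ∑ k ∈ range (m+3), ((m+3).choose (k+1) : ℝ) * (-1)^k = 1 := by
    have h0 : ∑ k ∈ range (m+4), ((m+3).choose k : ℝ) * (-1)^k = 0 := by
      rw [alt_sum]; norm_num
    rw [Finset.sum_range_succ'] at h0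
    simp only [pow_succ, mul_neg, mul_one, Finset.sum_neg_distrib,
      Nat.choose_zero_right, Nat.cast_one, one_mul, pow_zero] at h0
    linarith
  have hB : ∑ k ∈ range (m+3), ((m+3).choose (k+1) : ℝ) * (-1)^k *
      (((k:ℝ)+1) * (2⁻¹:ℝ)^k) = ((m:ℝ)+3) * (2⁻¹:ℝ)^(m+2) := by
    have h1 : ∀ k ∈ range (m+3), ((m+3).choose (k+1) : ℝ) * (-1)^k *
        (((k:ℝ)+1) * (2⁻¹:ℝ)^k) = ((m:ℝ)+3) * (((m+2).choose k : ℝ) * (-2⁻¹:ℝ)^k) := by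
      intro k _
      have h2 := B_id m k
      have h3 : (-2⁻¹:ℝ)^k = (-1)^k * (2⁻¹:ℝ)^k := by
        rw [neg_pow]
      rw [h3]
      linear_combination (-(-1:ℝ)^k * (2⁻¹:ℝ)^k) * h2
    rw [Finset.sum_congr rfl h1, ← Finset.mul_sum, alt_sum]
    norm_num
  have hC : ∑ k ∈ range (m+3), ((m+3).choose (k+1) : ℝ) * (-1)^k *
      ((k:ℝ) * ((k:ℝ)+1) / 4) = 0 := by
    rw [Finset.sum_range_succ']
    have h1 : ∀ k ∈ range (m+2), ((m+3).choose (k+1+1) : ℝ) * (-1)^(k+1) *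
        (((k+1:ℕ):ℝ) * (((k+1:ℕ):ℝ)+1) / 4)
        = -(((m:ℝ)+3) * (((m:ℝ)+2) / 4) * (((m+1).choose k : ℝ) * (-1)^k)) := by
      intro k _
      have h2 := B_id m (k+1)
      have h3 : ((m:ℝ)+2) * ((m+1).choose k : ℝ) = ((m+2).choose (k+1) : ℝ) * ((k:ℝ)+1) := by
        exact_mod_cast congrArg (Nat.cast (R := ℝ)) (Nat.add_one_mul_choose_eq (m+1) k)
      push_cast at h2 ⊢
      linear_combination ((-1:ℝ)^k*((k:ℝ)+1)/4) * h2
        + ((-1:ℝ)^k*((m:ℝ)+3)/4) * h3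
    rw [Finset.sum_congr rfl h1, Finset.sum_neg_distrib, ← Finset.mul_sum, alt_sum]
    norm_num
  rw [Finset.sum_range_succ']
  have hf0 : ((m+3).choose 0 : ℝ) * ((-1)^(0+1) * cc (0-1)) = 0 := by
    norm_num [cc]
  rw [hf0, add_zero]
  have hterm : ∀ k ∈ range (m+3), ((m+3).choose (k+1) : ℝ) * ((-1)^(k+1+1) * cc (k+1-1))
      = ((m+3).choose (k+1) : ℝ) * (-1)^k
        - ((m+3).choose (k+1) : ℝ) * (-1)^k * (((k:ℝ)+1) * (2⁻¹:ℝ)^k)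
        - ((m+3).choose (k+1) : ℝ) * (-1)^k * ((k:ℝ) * ((k:ℝ)+1) / 4) := by
    intro k _
    have : (k+1-1 : ℕ) = k := rfl
    rw [this, cc, two_zpow_neg]
    ring
  rw [Finset.sum_congr rfl hterm, Finset.sum_sub_distrib, Finset.sum_sub_distrib,
    hA, hB, hC]
  ring

lemma F_shift (n : ℕ) :
    F (n+1) = ∑ k ∈ range (n+1), (n.choose k : ℝ) * (aa k + aa (k+1)) := by
  have e1 := Finset.sum_range_succ' (fun k => ((n+1).choose k : ℝ) * aa k) (n+1)
  have e2 := Finset.sum_range_succ' (fun k => (n.choose k : ℝ) * aa k) (n+1)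
  have e3 := Finset.sum_range_succ (fun k => (n.choose k : ℝ) * aa k) (n+1)
  simp only [aa0, mul_zero, add_zero, Nat.choose_succ_succ'] at e1 e2 e3
  rw [Nat.choose_succ_self] at e3
  simp only [Nat.cast_zero, zero_mul, add_zero] at e3
  rw [F, e1]
  rw [show (∑ k ∈ range (n+1), (((n.choose k : ℕ) + n.choose (k+1) : ℕ) : ℝ) * aa (k+1))
      = ∑ k ∈ range (n+1), ((n.choose k : ℝ) * aa (k+1) + (n.choose (k+1) : ℝ) * aa (k+1))
    from Finset.sum_congr rfl (by intro k _; push_cast; ring)]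
  rw [Finset.sum_add_distrib]
  have e4 : ∑ k ∈ range (n+1), (n.choose (k+1) : ℝ) * aa (k+1)
      = ∑ k ∈ range (n+1), (n.choose k : ℝ) * aa k := by
    rw [← e2, e3]
  rw [e4]
  rw [show (∑ k ∈ range (n+1), (n.choose k : ℝ) * (aa k + aa (k+1)))
      = ∑ k ∈ range (n+1), ((n.choose k : ℝ) * aa (k+1) + (n.choose k : ℝ) * aa k)
    from Finset.sum_congr rfl (by intro k _; ring)]
  rw [Finset.sum_add_distrib]

lemma F_rec (n : ℕ) (hn : 3 ≤ n) :
    F (n+1) = 1 + (2:ℝ)^(1-(n:ℤ)) * ∑ k ∈ range (n+1), (n.choose k : ℝ) * F k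
      - (n:ℝ) * (2:ℝ)^(1-(n:ℤ)) := by
  obtain ⟨m, rfl⟩ : ∃ m, n = m + 3 := ⟨n - 3, by omega⟩
  have hFu : ∑ k ∈ range (m+3+1), ((m+3).choose k:ℝ) * F k
      = ∑ j ∈ range (m+3+1), ((m+3).choose j:ℝ) * (2:ℝ)^(m+3-j) * aa j := by
    have h1 : ∀ k ∈ range (m+3+1), ((m+3).choose k:ℝ) * F k
        = ∑ j ∈ range (m+3+1), ((m+3).choose k:ℝ) * ((k.choose j:ℝ) * aa j) := by
      intro k hk
      rw [F, Finset.mul_sum]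
      apply Finset.sum_subset
      · exact Finset.range_subset_range.mpr (by have := mem_range.mp hk; omega)
      · intro j hj hj'
        simp only [mem_range, not_lt] at hj hj'
        rw [Nat.choose_eq_zero_of_lt (show k < j by omega)]
        simp
    rw [Finset.sum_congr rfl h1, Finset.sum_comm]
    apply Finset.sum_congr rfl
    intro j hj
    have hj' : j ≤ m+3 := by simpa [Nat.lt_succ_iff] using mem_range.mp hj
    have t' : ∑ x ∈ range (m+3+1), ((m+3).choose x : ℝ) * (x.choose j : ℝ)
        = ((m+3).choose j : ℝ) * 2^(m+3-j) := by
      exact_mod_cast congrArg (Nat.cast (R := ℝ)) (trinom (m+3) j hj')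
    simp only [← mul_assoc]
    rw [← Finset.sum_mul, t']
  rw [F_shift, hFu]
  have hkey : ∀ k ∈ range (m+3+1), ((m+3).choose k : ℝ) * (aa k + aa (k+1))
      = ((m+3).choose k : ℝ) * ((2:ℝ)^(1-(k:ℤ)) * aa k)
        + ((m+3).choose k : ℝ) * ((-1)^(k+1) * cc (k-1)) := by
    intro k _
    linear_combination ((m+3).choose k : ℝ) * key k
  rw [Finset.sum_congr rfl hkey, Finset.sum_add_distrib, main_id, Finset.mul_sum]
  have hterm : ∀ j ∈ range (m+3+1),
      (2:ℝ)^(1-((m+3:ℕ):ℤ)) * (((m+3).choose j:ℝ) * (2:ℝ)^(m+3-j) * aa j)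
      = ((m+3).choose j : ℝ) * ((2:ℝ)^(1-(j:ℤ)) * aa j) := by
    intro j hj
    have hj' : j ≤ m+3 := by simpa [Nat.lt_succ_iff] using mem_range.mp hj
    have h2 : (2:ℝ)^(m+3-j) = (2:ℝ)^(((m:ℤ)+3) - (j:ℤ)) := by
      rw [← zpow_natCast]
      congr 1
      omega
    have h4 : (2:ℝ)^(1-((m+3:ℕ):ℤ)) * (2:ℝ)^(((m:ℤ)+3)-(j:ℤ)) = (2:ℝ)^(1-(j:ℤ)) := by
      rw [← zpow_add₀ (two_ne_zero)]
      congr 1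
      push_cast
      ring
    rw [h2]
    linear_combination (((m+3).choose j : ℝ) * aa j) * h4
  rw [Finset.sum_congr rfl hterm]
  have h3 : (2:ℝ)^(1-((m+3:ℕ):ℤ)) = (2⁻¹:ℝ)^(m+2) := by
    rw [show (1-((m+3:ℕ):ℤ)) = -((m+2:ℕ):ℤ) by push_cast; ring, two_zpow_neg]
  rw [h3]
  push_cast
  ring

lemma aa2 : aa 2 = 0 := by simp [aa, S]

lemma aa3 : aa 3 = 1/2 := by
  have h1 : aa 3 = (-1)^3 * Q 1 * S 1 := rfl
  rw [h1]
  simp only [S, Q, cc, Finset.Icc_self, Finset.sum_singleton, Finset.prod_singleton]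
  norm_num

/-- For every `N ≥ 1`, the average number `l N` of 2-protected nodes in a random
digital search tree of size `N` is given by the exact formula
`l N = ∑_{k=2}^N C(N,k) (-1)^k Q_{k-2} ∑_{n=1}^{k-2} (1-(n+1)2^{-n}-n(n+1)/4)/Q_n`. -/
theorem dst_two_protected_exact
    (l : ℕ → ℝ)
    (h0 : l 0 = 0) (h1 : l 1 = 0) (h2 : l 2 = 0) (h3 : l 3 = 1/2)
    (hrec : ∀ n : ℕ, 3 ≤ n →
      l (n+1) = 1 + (2:ℝ) ^ (1 - (n:ℤ)) * ∑ k ∈ Finset.range (n+1), (n.choose k : ℝ) * l k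
        - (n : ℝ) * (2:ℝ) ^ (1 - (n:ℤ))) :
    ∀ N : ℕ, 1 ≤ N →
      l N = ∑ k ∈ Finset.Icc 2 N, (N.choose k : ℝ) * (-1)^k * Q (k-2) *
        ∑ n ∈ Finset.Icc 1 (k-2),
          (1 - ((n:ℝ)+1) * (2:ℝ) ^ (-(n:ℤ)) - (n:ℝ) * ((n:ℝ)+1) / 4) / Q n := by
  have hF : ∀ N : ℕ, l N = F N := by
    intro N
    induction N using Nat.strong_induction_on with
    | _ N ih =>
      match N, ih with
      | 0, _ => simp [F, aa0, h0]
      | 1, _ => simp [F, Finset.sum_range_succ, aa0, aa1, h1]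
      | 2, _ => simp [F, Finset.sum_range_succ, aa0, aa1, aa2, h2]
      | 3, _ =>
        rw [h3, F]
        simp [Finset.sum_range_succ, aa0, aa1, aa2, aa3]
      | (n+4), ih =>
        have hs : ∑ k ∈ range (n+3+1), ((n+3).choose k : ℝ) * l k
            = ∑ k ∈ range (n+3+1), ((n+3).choose k : ℝ) * F k :=
          Finset.sum_congr rfl (fun k hk => by
            rw [ih k (by have := mem_range.mp hk; omega)])
        show l (n+3+1) = F (n+3+1)
        rw [hrec (n+3) (by omega), hs, ← F_rec (n+3) (by omega)]
  intro N _
  rw [hF N, F]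
  have hIcc : ∀ k ∈ Icc 2 N, (N.choose k : ℝ) * (-1)^k * Q (k-2) *
      (∑ n ∈ Finset.Icc 1 (k-2),
        (1 - ((n:ℝ)+1) * (2:ℝ) ^ (-(n:ℤ)) - (n:ℝ) * ((n:ℝ)+1) / 4) / Q n)
      = (N.choose k : ℝ) * aa k := by
    intro k _
    rw [aa, S]
    simp only [cc]
    ring
  rw [Finset.sum_congr rfl hIcc]
  symm
  apply Finset.sum_subset
  · intro k hk
    simp only [mem_Icc] at hk
    simp only [mem_range]
    omega
  · intro k hk hk'
    simp only [mem_range] at hk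
    simp only [mem_Icc, not_and, not_le] at hk'
    have : k = 0 ∨ k = 1 := by omega
    rcases this with rfl | rfl
    · simp [aa0]
    · simp [aa1]
end

section
/- The exponential generating function L(z) = ∑_{n≥0} l_n z^n/n! converges for every complex z, and the resulting entire function satisfies the difference-differential equation L'(z) = e^z − z·e^{z/2} − 1 + z²/4 + 2·e^{z/2}·L(z/2) for all z ∈ ℂ. -/
open Finset

private lemma two_mul_two_pow_le_aux (n : ℕ) (hn : 2 ≤ n) : (2:ℝ) * 2 ^ n ≤ 3 ^ n := by
  induction n, hn using Nat.le_induction with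
  | base => norm_num
  | succ m hm ih =>
    rw [pow_succ, pow_succ]
    nlinarith [pow_nonneg (by norm_num : (0:ℝ) ≤ 2) m, pow_nonneg (by norm_num : (0:ℝ) ≤ 3) m]

/-- The exponential generating function `L(z) = ∑ l_n z^n/n!` converges everywhere
and the resulting entire function satisfies
`L'(z) = e^z - z e^{z/2} - 1 + z²/4 + 2 e^{z/2} L(z/2)` for all `z ∈ ℂ`. -/
theorem dst_egf_equation
    (l : ℕ → ℝ)
    (h0 : l 0 = 0) (h1 : l 1 = 0) (h2 : l 2 = 0) (h3 : l 3 = 1/2)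
    (hrec : ∀ n : ℕ, 3 ≤ n →
      l (n+1) = 1 + (2:ℝ) ^ (1 - (n:ℤ)) * ∑ k ∈ Finset.range (n+1), (n.choose k : ℝ) * l k
        - (n : ℝ) * (2:ℝ) ^ (1 - (n:ℤ))) :
    ∃ L : ℂ → ℂ,
      (∀ z : ℂ, HasSum (fun n : ℕ => (l n : ℂ) * z ^ n / (n.factorial : ℂ)) (L z)) ∧
      (∀ z : ℂ, HasDerivAt L
        (Complex.exp z - z * Complex.exp (z/2) - 1 + z^2/4
          + 2 * Complex.exp (z/2) * L (z/2)) z) := by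
  -- growth bound
  have hb : ∀ n, |l n| ≤ 3 ^ n := by
    intro n
    induction n using Nat.strong_induction_on with
    | _ n ih =>
      match n, ih with
      | 0, _ => rw [h0]; norm_num
      | 1, _ => rw [h1]; norm_num
      | 2, _ => rw [h2]; norm_num
      | 3, _ => rw [h3, abs_of_pos (by norm_num : (0:ℝ) < 1/2)]; norm_num
      | (m+4), ih =>
        have key := hrec (m+3) (by omega)
        have hS : |∑ k ∈ range (m+3+1), ((m+3).choose k : ℝ) * l k| ≤ 4 ^ (m+3) := by
          calc |∑ k ∈ range (m+3+1), ((m+3).choose k : ℝ) * l k|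
              ≤ ∑ k ∈ range (m+3+1), |((m+3).choose k : ℝ) * l k| :=
                Finset.abs_sum_le_sum_abs _ _
            _ ≤ ∑ k ∈ range (m+3+1), ((m+3).choose k : ℝ) * 3 ^ k := by
                refine Finset.sum_le_sum fun k hk => ?_
                rw [abs_mul, Nat.abs_cast]
                exact mul_le_mul_of_nonneg_left
                  (ih k (by have := Finset.mem_range.mp hk; omega)) (Nat.cast_nonneg _)
            _ = ∑ k ∈ range (m+3+1), 3 ^ k * 1 ^ (m+3-k) * ((m+3).choose k : ℝ) := by
                refine Finset.sum_congr rfl fun k _ => ?_; ring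
            _ = ((3:ℝ) + 1) ^ (m+3) := (add_pow (3:ℝ) 1 (m+3)).symm
            _ = 4 ^ (m+3) := by norm_num
        have h2p : (2:ℝ) ^ (1 - ((m+3:ℕ):ℤ)) = 2 / 2 ^ (m+3) := by
          rw [zpow_sub₀ (two_ne_zero), zpow_one, zpow_natCast]
        have hpow2 : (0:ℝ) < 2 ^ (m+3) := by positivity
        have hb23 : (2:ℝ) * 2 ^ (m+3) ≤ 3 ^ (m+3) := two_mul_two_pow_le_aux _ (by omega)
        have hm2 : ((m+3:ℕ):ℝ) ≤ 2 ^ (m+3) := by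
          exact_mod_cast (Nat.lt_two_pow_self (n := m+3)).le
        have h4 : (4:ℝ) ^ (m+3) = 2 ^ (m+3) * 2 ^ (m+3) := by
          rw [← mul_pow]; norm_num
        have hSu := (abs_le.mp hS).2
        have hSl := (abs_le.mp hS).1
        have hcu : (2 / 2 ^ (m+3)) * (∑ k ∈ range (m+3+1), ((m+3).choose k : ℝ) * l k)
            ≤ 2 * 2 ^ (m+3) := by
          calc (2 / 2 ^ (m+3)) * (∑ k ∈ range (m+3+1), ((m+3).choose k : ℝ) * l k)
              ≤ (2 / 2 ^ (m+3)) * 4 ^ (m+3) :=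
                mul_le_mul_of_nonneg_left hSu (by positivity)
            _ = 2 * 2 ^ (m+3) := by rw [h4]; field_simp
        have hcl : -(2 * 2 ^ (m+3))
            ≤ (2 / 2 ^ (m+3)) * (∑ k ∈ range (m+3+1), ((m+3).choose k : ℝ) * l k) := by
          calc -(2 * 2 ^ (m+3)) = (2 / 2 ^ (m+3)) * (-(4 ^ (m+3))) := by
                rw [h4]; field_simp
            _ ≤ (2 / 2 ^ (m+3)) * (∑ k ∈ range (m+3+1), ((m+3).choose k : ℝ) * l k) :=
                mul_le_mul_of_nonneg_left hSl (by positivity)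
        have hnc : (0:ℝ) ≤ ((m+3:ℕ):ℝ) * (2 / 2 ^ (m+3)) := by positivity
        have hnc2 : ((m+3:ℕ):ℝ) * (2 / 2 ^ (m+3)) ≤ 2 := by
          rw [mul_div_assoc', div_le_iff₀ hpow2]
          nlinarith [hm2]
        have h3p : (1:ℝ) ≤ 3 ^ (m+3) := by
          have h' : (1:ℝ) = 1 ^ (m+3) := (one_pow _).symm
          rw [h']; gcongr <;> norm_num
        have h3s : (3:ℝ) ^ (m+4) = 3 ^ (m+3) * 3 := by rw [pow_succ]
        rw [show m+4 = (m+3)+1 from rfl, key, h2p, abs_le]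
        constructor
        · rw [show (m+3)+1 = m+4 from rfl, h3s]; linarith
        · rw [show (m+3)+1 = m+4 from rfl, h3s]; linarith
  -- summability of norms
  have hnorm : ∀ w : ℂ, Summable fun n : ℕ => ‖(l n : ℂ) * w ^ n / (n.factorial : ℂ)‖ := by
    intro w
    refine Summable.of_nonneg_of_le (fun n => norm_nonneg _) (fun n => ?_)
      (Real.summable_pow_div_factorial (3 * ‖w‖))
    simp only [norm_div, norm_mul, norm_pow, Complex.norm_natCast, Complex.norm_real,
      Real.norm_eq_abs]
    rw [mul_pow]
    gcongr
    exact hb n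
  have hsum : ∀ w : ℂ, Summable fun n : ℕ => (l n : ℂ) * w ^ n / (n.factorial : ℂ) :=
    fun w => (hnorm w).of_norm
  refine ⟨fun w => ∑' n : ℕ, (l n : ℂ) * w ^ n / (n.factorial : ℂ),
    fun w => (hsum w).hasSum, ?_⟩
  intro z
  -- abbreviation for the sum at z/2
  have hL2 : HasSum (fun n : ℕ => (l n : ℂ) * (z/2) ^ n / (n.factorial : ℂ))
      (∑' n : ℕ, (l n : ℂ) * (z/2) ^ n / (n.factorial : ℂ)) := (hsum (z/2)).hasSum
  -- exp series
  have hexp : HasSum (fun n : ℕ => z ^ n / (n.factorial : ℂ)) (Complex.exp z) := by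
    rw [Complex.exp_eq_exp_ℂ]; exact NormedSpace.expSeries_div_hasSum_exp z
  have hexp2 : HasSum (fun n : ℕ => (z/2) ^ n / (n.factorial : ℂ)) (Complex.exp (z/2)) := by
    rw [Complex.exp_eq_exp_ℂ]; exact NormedSpace.expSeries_div_hasSum_exp (z/2)
  -- the series for z·e^{z/2}
  have hF : HasSum (fun n : ℕ => (n:ℂ) * (2:ℂ) ^ (1 - (n:ℤ)) * z ^ n / (n.factorial : ℂ))
      (z * Complex.exp (z/2)) := by
    have hm := hexp2.mul_left z
    have e : (fun n : ℕ =>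
        ((n+1 : ℕ):ℂ) * (2:ℂ) ^ (1 - ((n+1 : ℕ):ℤ)) * z ^ (n+1) / (((n+1 : ℕ).factorial : ℂ)))
        = fun n : ℕ => z * ((z/2) ^ n / (n.factorial : ℂ)) := by
      funext n
      have h2 : (2:ℂ) ^ (1 - ((n+1 : ℕ):ℤ)) = ((2:ℂ) ^ n)⁻¹ := by
        push_cast
        rw [show (1 - ((n:ℤ)+1)) = -(n:ℤ) by ring, zpow_neg, zpow_natCast]
      have hfn : ((n.factorial : ℂ)) ≠ 0 := Nat.cast_ne_zero.mpr n.factorial_ne_zero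
      have h2n : ((2:ℂ) ^ n) ≠ 0 := pow_ne_zero _ two_ne_zero
      have hn1 : ((n:ℂ)+1) ≠ 0 := by
        exact_mod_cast (Nat.cast_ne_zero (R := ℂ)).mpr (Nat.succ_ne_zero n)
      rw [h2, Nat.factorial_succ, div_pow]
      push_cast
      field_simp
      ring
    refine (hasSum_nat_add_iff' 1).mp ?_
    simp only [Finset.sum_range_one, Nat.cast_zero, zero_mul, zero_div, sub_zero]
    have key' : HasSum (fun n : ℕ =>
        ((n+1 : ℕ):ℂ) * (2:ℂ) ^ (1 - ((n+1 : ℕ):ℤ)) * z ^ (n+1) / (((n+1 : ℕ).factorial : ℂ)))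
        (z * Complex.exp (z/2)) := by
      rw [e]; exact hm
    exact key'
  -- Cauchy product series for 2·e^{z/2}·L(z/2)
  have hnormg : Summable fun n : ℕ => ‖(z/2) ^ n / (n.factorial : ℂ)‖ := by
    refine (Real.summable_pow_div_factorial ‖z/2‖).congr fun n => ?_
    simp [norm_div, norm_pow, Complex.norm_natCast]
  have hcauchy := hasSum_sum_range_mul_of_summable_norm (hnorm (z/2)) hnormg
  rw [hL2.tsum_eq, hexp2.tsum_eq] at hcauchy
  have hT : HasSum (fun n : ℕ =>
      (2:ℂ) ^ (1 - (n:ℤ)) * (∑ k ∈ range (n+1), (n.choose k : ℂ) * (l k : ℂ)) * z ^ n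
        / (n.factorial : ℂ))
      (2 * ((∑' n : ℕ, (l n : ℂ) * (z/2) ^ n / (n.factorial : ℂ)) * Complex.exp (z/2))) := by
    have hm := hcauchy.mul_left 2
    have e : (fun n : ℕ => (2:ℂ) *
        ∑ k ∈ range (n+1), ((l k : ℂ) * (z/2) ^ k / (k.factorial : ℂ))
          * ((z/2) ^ (n-k) / ((n-k).factorial : ℂ)))
        = fun n : ℕ =>
          (2:ℂ) ^ (1 - (n:ℤ)) * (∑ k ∈ range (n+1), (n.choose k : ℂ) * (l k : ℂ)) * z ^ n
            / (n.factorial : ℂ) := by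
      funext n
      have step : ∀ k ∈ range (n+1),
          ((l k : ℂ) * (z/2) ^ k / (k.factorial : ℂ)) * ((z/2) ^ (n-k) / ((n-k).factorial : ℂ))
            = ((n.choose k : ℂ) * (l k : ℂ)) * ((z/2) ^ n / (n.factorial : ℂ)) := by
        intro k hk
        have hkn : k ≤ n := Nat.lt_succ_iff.mp (Finset.mem_range.mp hk)
        have hfac : ((n.choose k : ℂ)) * (k.factorial : ℂ) * ((n-k).factorial : ℂ)
            = (n.factorial : ℂ) := by
          exact_mod_cast congrArg (Nat.cast : ℕ → ℂ)
            (Nat.choose_mul_factorial_mul_factorial hkn)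
        have hpow : (z/2 : ℂ) ^ k * (z/2) ^ (n-k) = (z/2) ^ n := by
          rw [← pow_add, Nat.add_sub_cancel' hkn]
        have hk0 : ((k.factorial : ℂ)) ≠ 0 := Nat.cast_ne_zero.mpr k.factorial_ne_zero
        have hnk0 : (((n-k).factorial : ℂ)) ≠ 0 := Nat.cast_ne_zero.mpr (n-k).factorial_ne_zero
        have hn0 : ((n.factorial : ℂ)) ≠ 0 := Nat.cast_ne_zero.mpr n.factorial_ne_zero
        rw [div_mul_div_comm, mul_assoc, hpow, mul_div_assoc']
        rw [div_eq_div_iff (mul_ne_zero hk0 hnk0) hn0, ← hfac]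
        ring
      rw [Finset.sum_congr rfl step, ← Finset.sum_mul]
      have h2 : (2:ℂ) ^ (1 - (n:ℤ)) = 2 / (2:ℂ) ^ n := by
        rw [zpow_sub₀ two_ne_zero, zpow_one, zpow_natCast]
      have h2n : ((2:ℂ) ^ n) ≠ 0 := pow_ne_zero _ two_ne_zero
      have hn0 : ((n.factorial : ℂ)) ≠ 0 := Nat.cast_ne_zero.mpr n.factorial_ne_zero
      rw [h2, div_pow]
      field_simp
    rw [e] at hm
    exact hm
  -- finite correction term
  have hP : HasSum (fun n : ℕ => if n = 0 then (-1:ℂ) else if n = 2 then z^2/4 else 0)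
      (-1 + z^2/4) := by
    have hvan : ∀ b ∉ ({0, 2} : Finset ℕ),
        (if b = 0 then (-1:ℂ) else if b = 2 then z^2/4 else 0) = 0 := by
      intro b hb
      simp only [Finset.mem_insert, Finset.mem_singleton, not_or] at hb
      rw [if_neg hb.1, if_neg hb.2]
    have hsum02 : ∑ b ∈ ({0, 2} : Finset ℕ),
        (if b = 0 then (-1:ℂ) else if b = 2 then z^2/4 else 0) = -1 + z^2/4 := by
      rw [Finset.sum_pair (by norm_num : (0:ℕ) ≠ 2)]
      norm_num
    exact hsum02 ▸ hasSum_sum_of_ne_finset_zero hvan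
  -- assemble: the series for the shifted coefficients
  have key : HasSum (fun n : ℕ => (l (n+1) : ℂ) * z ^ n / (n.factorial : ℂ))
      (((Complex.exp z - z * Complex.exp (z/2)) + (-1 + z^2/4))
        + 2 * ((∑' n : ℕ, (l n : ℂ) * (z/2) ^ n / (n.factorial : ℂ)) * Complex.exp (z/2))) := by
    have H := ((hexp.sub hF).add hP).add hT
    have e : (fun n : ℕ => (l (n+1) : ℂ) * z ^ n / (n.factorial : ℂ))
        = fun n : ℕ =>
          ((z ^ n / (n.factorial : ℂ)
            - (n:ℂ) * (2:ℂ) ^ (1 - (n:ℤ)) * z ^ n / (n.factorial : ℂ))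
           + (if n = 0 then (-1:ℂ) else if n = 2 then z^2/4 else 0))
          + (2:ℂ) ^ (1 - (n:ℤ)) * (∑ k ∈ range (n+1), (n.choose k : ℂ) * (l k : ℂ)) * z ^ n
              / (n.factorial : ℂ) := by
      funext n
      match n with
      | 0 =>
        norm_num [h0, h1, Finset.sum_range_one]
      | 1 =>
        norm_num [h0, h1, h2, Finset.sum_range_succ, Finset.sum_range_one]
      | 2 =>
        have hz2 : (2:ℂ) ^ (1 - ((2:ℕ):ℤ)) = 2⁻¹ := by
          norm_num
        norm_num [h0, h1, h2, h3, Finset.sum_range_succ, Finset.sum_range_one, hz2]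
        ring
      | (m+3) =>
        have hc := hrec (m+3) (by omega)
        have hne0 : ¬(m+3 = 0) := by omega
        have hne2 : ¬(m+3 = 2) := by omega
        rw [if_neg hne0, if_neg hne2, show m+3+1 = (m+3)+1 from rfl, hc]
        push_cast
        ring
    rw [e]
    exact H
  -- derivative of the sum, term by term, on the ball of radius ‖z‖+1
  have hzmem : z ∈ Metric.ball (0:ℂ) (‖z‖ + 1) := by
    rw [Metric.mem_ball, dist_zero_right]; linarith
  have hu : Summable (fun n : ℕ => 3 * (3 * (‖z‖ + 1)) ^ (n-1) / ((n-1).factorial : ℝ)) := by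
    rw [← summable_nat_add_iff 1]
    exact ((Real.summable_pow_div_factorial (3 * (‖z‖ + 1))).mul_left 3).congr
      fun n => (mul_div_assoc 3 ((3 * (‖z‖ + 1)) ^ n) ((n.factorial : ℝ))).symm
  have hbound : ∀ (n : ℕ) (w : ℂ), w ∈ Metric.ball (0:ℂ) (‖z‖ + 1) →
      ‖(l n : ℂ) * ((n:ℂ) * w ^ (n-1)) / (n.factorial : ℂ)‖
        ≤ 3 * (3 * (‖z‖ + 1)) ^ (n-1) / ((n-1).factorial : ℝ) := by
    intro n w hw
    have hwR : ‖w‖ ≤ ‖z‖ + 1 := by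
      rw [Metric.mem_ball, dist_zero_right] at hw; linarith
    match n with
    | 0 =>
      simp only [Nat.cast_zero, zero_mul, mul_zero, zero_div, norm_zero]
      positivity
    | (m+1) =>
      simp only [Nat.add_sub_cancel]
      rw [norm_div, norm_mul, norm_mul, norm_pow, Complex.norm_natCast, Complex.norm_natCast,
        Complex.norm_real, Real.norm_eq_abs]
      calc |l (m+1)| * (((m+1:ℕ):ℝ) * ‖w‖ ^ m) / (((m+1:ℕ).factorial : ℝ))
          ≤ (3:ℝ) ^ (m+1) * (((m+1:ℕ):ℝ) * (‖z‖ + 1) ^ m) / (((m+1:ℕ).factorial : ℝ)) := by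
            gcongr
            all_goals first | exact hb (m+1) | exact hwR
        _ = 3 * (3 * (‖z‖ + 1)) ^ m / ((m.factorial : ℝ)) := by
            rw [Nat.factorial_succ]
            have hfn : ((m.factorial : ℝ)) ≠ 0 := Nat.cast_ne_zero.mpr m.factorial_ne_zero
            have hm1 : ((m:ℝ)+1) ≠ 0 := by positivity
            push_cast
            rw [mul_pow]
            field_simp
            ring
  have hderiv : ∀ (n : ℕ) (w : ℂ), w ∈ Metric.ball (0:ℂ) (‖z‖ + 1) →
      HasDerivAt (fun y : ℂ => (l n : ℂ) * y ^ n / (n.factorial : ℂ))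
        ((l n : ℂ) * ((n:ℂ) * w ^ (n-1)) / (n.factorial : ℂ)) w :=
    fun n w _ => ((hasDerivAt_pow n w).const_mul ((l n : ℂ))).div_const ((n.factorial : ℂ))
  have hd : HasDerivAt (fun w : ℂ => ∑' n : ℕ, (l n : ℂ) * w ^ n / (n.factorial : ℂ))
      (∑' n : ℕ, (l n : ℂ) * ((n:ℂ) * z ^ (n-1)) / (n.factorial : ℂ)) z :=
    hasDerivAt_tsum_of_isPreconnected hu Metric.isOpen_ball
      (convex_ball (0:ℂ) (‖z‖ + 1)).isPreconnected hderiv hbound hzmem (hsum z) hzmem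
  -- identify the derivative series with the shifted series
  have hsers : HasSum (fun n : ℕ => (l n : ℂ) * ((n:ℂ) * z ^ (n-1)) / (n.factorial : ℂ))
      (((Complex.exp z - z * Complex.exp (z/2)) + (-1 + z^2/4))
        + 2 * ((∑' n : ℕ, (l n : ℂ) * (z/2) ^ n / (n.factorial : ℂ)) * Complex.exp (z/2))) := by
    refine (hasSum_nat_add_iff' 1).mp ?_
    simp only [Finset.sum_range_one, Nat.cast_zero, zero_mul, mul_zero, zero_div, sub_zero]
    have e2 : (fun n : ℕ =>
        (l (n+1) : ℂ) * (((n+1:ℕ):ℂ) * z ^ ((n+1)-1)) / (((n+1:ℕ).factorial : ℂ)))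
        = fun n : ℕ => (l (n+1) : ℂ) * z ^ n / (n.factorial : ℂ) := by
      funext n
      have hfn : ((n.factorial : ℂ)) ≠ 0 := Nat.cast_ne_zero.mpr n.factorial_ne_zero
      have hn1 : ((n:ℂ)+1) ≠ 0 := by
        exact_mod_cast (Nat.cast_ne_zero (R := ℂ)).mpr (Nat.succ_ne_zero n)
      rw [Nat.factorial_succ, show (n+1)-1 = n from rfl]
      push_cast
      field_simp
    have key' : HasSum (fun n : ℕ =>
        (l (n+1) : ℂ) * (((n+1:ℕ):ℂ) * z ^ ((n+1)-1)) / (((n+1:ℕ).factorial : ℂ)))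
        (((Complex.exp z - z * Complex.exp (z/2)) + (-1 + z^2/4))
          + 2 * ((∑' n : ℕ, (l n : ℂ) * (z/2) ^ n / (n.factorial : ℂ)) * Complex.exp (z/2))) := by
      rw [e2]; exact key
    exact key'
  rw [hsers.tsum_eq] at hd
  have hv : (((Complex.exp z - z * Complex.exp (z/2)) + (-1 + z^2/4))
        + 2 * ((∑' n : ℕ, (l n : ℂ) * (z/2) ^ n / (n.factorial : ℂ)) * Complex.exp (z/2)))
      = Complex.exp z - z * Complex.exp (z/2) - 1 + z^2/4
          + 2 * Complex.exp (z/2) * (∑' n : ℕ, (l n : ℂ) * (z/2) ^ n / (n.factorial : ℂ)) := by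
    ring
  rw [hv] at hd
  exact hd
end

section
/- The Poisson generating function M(z) = e^{-z} L(z), where L(z) = ∑_{n≥0} l_n z^n/n! is entire, satisfies M'(z) + M(z) = 1 − z·e^{-z/2} − e^{-z} + (z²/4)·e^{-z} + 2·M(z/2) for all z ∈ ℂ. -/
open Finset

section Aux
open Filter

lemma aux_exists_bound (l : ℕ → ℝ)
    (hS : ∀ z : ℂ, Summable fun n : ℕ => (l n : ℂ) * z ^ n / (n.factorial : ℂ))
    (r : ℝ) : ∃ C : ℝ, ∀ n : ℕ, |l n| * |r| ^ n / n.factorial ≤ C := by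
  have h := (hS ((r : ℝ) : ℂ)).tendsto_atTop_zero.norm
  have h2 : Tendsto (fun n : ℕ => |l n| * |r| ^ n / n.factorial) atTop (nhds 0) := by
    rw [show (0:ℝ) = ‖(0:ℂ)‖ by simp]
    convert h using 2 with n
    rw [norm_div, norm_mul, norm_pow]
    simp
  obtain ⟨C, hC⟩ := h2.bddAbove_range
  exact ⟨C, fun n => hC ⟨n, rfl⟩⟩

lemma aux_summable (l : ℕ → ℝ)
    (hS : ∀ z : ℂ, Summable fun n : ℕ => (l n : ℂ) * z ^ n / (n.factorial : ℂ))
    (r : ℝ) (hr : 0 ≤ r) :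
    Summable (fun n : ℕ => |l n| * r ^ n / n.factorial) := by
  obtain ⟨C, hC⟩ := aux_exists_bound l hS (2*r)
  have h2r : |2*r| = 2*r := abs_of_nonneg (by linarith)
  rw [h2r] at hC
  apply Summable.of_nonneg_of_le (f := fun n : ℕ => C * (1/2)^n) (fun n => by positivity) ?_ ?_
  · intro n
    calc |l n| * r^n / n.factorial
        = |l n| * ((2*r)^n * (1/2)^n) / n.factorial := by
          rw [← mul_pow, show 2*r*(1/2) = r by ring]
      _ = (|l n| * (2*r)^n / n.factorial) * (1/2)^n := by ring
      _ ≤ C * (1/2)^n := mul_le_mul_of_nonneg_right (hC n) (by positivity)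
  · exact (summable_geometric_of_lt_one (by norm_num) (by norm_num)).mul_left C

lemma aux_summable_deriv (l : ℕ → ℝ)
    (hS : ∀ z : ℂ, Summable fun n : ℕ => (l n : ℂ) * z ^ n / (n.factorial : ℂ))
    (R : ℝ) (hR : 0 < R) :
    Summable (fun n : ℕ => |l n| * ((n:ℝ) * R ^ (n-1)) / n.factorial) := by
  obtain ⟨C, hC⟩ := aux_exists_bound l hS (2*R)
  have h2R : |2*R| = 2*R := abs_of_nonneg (by linarith)
  rw [h2R] at hC
  apply Summable.of_nonneg_of_le (f := fun n : ℕ => (C/R) * ((n:ℝ) * (1/2)^n)) (fun n => by positivity) ?_ ?_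
  · intro n
    match n with
    | 0 => simp
    | (n+1) =>
      have hb := hC (n+1)
      have hfac : ((n+1).factorial : ℝ) ≠ 0 := Nat.cast_ne_zero.mpr (n+1).factorial_ne_zero
      calc |l (n+1)| * (((n+1:ℕ):ℝ) * R^((n+1)-1)) / (n+1).factorial
          = (|l (n+1)| * (2*R)^(n+1) / (n+1).factorial) * (((n+1:ℕ):ℝ) * (1/2)^(n+1) / R) := by
            simp only [Nat.add_sub_cancel]
            rw [mul_pow, show ((1:ℝ)/2)^(n+1) = ((2:ℝ)^(n+1))⁻¹ by
              rw [one_div, inv_pow]]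
            field_simp
            ring
        _ ≤ C * (((n+1:ℕ):ℝ) * (1/2)^(n+1) / R) := mul_le_mul_of_nonneg_right hb (by positivity)
        _ = (C/R) * (((n+1:ℕ):ℝ) * (1/2)^(n+1)) := by ring
  · have := (summable_pow_mul_geometric_of_norm_lt_one 1 (r := (1/2:ℝ)) (by norm_num)).mul_left (C/R)
    simpa [pow_one] using this

end Aux

/-- The Poisson generating function `M(z) = e^{-z} L(z)` satisfies
`M'(z) + M(z) = 1 - z e^{-z/2} - e^{-z} + (z²/4) e^{-z} + 2 M(z/2)` for all `z ∈ ℂ`. -/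
theorem dst_poisson_equation
    (l : ℕ → ℝ)
    (h0 : l 0 = 0) (h1 : l 1 = 0) (h2 : l 2 = 0) (h3 : l 3 = 1/2)
    (hrec : ∀ n : ℕ, 3 ≤ n →
      l (n+1) = 1 + (2:ℝ) ^ (1 - (n:ℤ)) * ∑ k ∈ Finset.range (n+1), (n.choose k : ℝ) * l k
        - (n : ℝ) * (2:ℝ) ^ (1 - (n:ℤ)))
    (L : ℂ → ℂ)
    (hL : ∀ z : ℂ, HasSum (fun n : ℕ => (l n : ℂ) * z ^ n / (n.factorial : ℂ)) (L z)) :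
    ∀ z : ℂ, HasDerivAt (fun w => Complex.exp (-w) * L w)
      (1 - z * Complex.exp (-z/2) - Complex.exp (-z) + z^2/4 * Complex.exp (-z)
        + 2 * (Complex.exp (-(z/2)) * L (z/2)) - Complex.exp (-z) * L z) z := by
  intro z
  have hS : ∀ w : ℂ, Summable fun n : ℕ => (l n : ℂ) * w ^ n / (n.factorial : ℂ) :=
    fun w => (hL w).summable
  have hexp : ∀ w : ℂ, HasSum (fun n : ℕ => w ^ n / (n.factorial : ℂ)) (Complex.exp w) := by
    intro w
    rw [Complex.exp_eq_exp_ℂ]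
    exact NormedSpace.expSeries_div_hasSum_exp w
  -- Cauchy product for the term 2 e^{z/2} L(z/2)
  have hnorm1 : Summable fun n : ℕ => ‖(l n : ℂ) * (z/2) ^ n / (n.factorial : ℂ)‖ := by
    have := aux_summable l hS ‖z/2‖ (norm_nonneg _)
    convert this using 2 with n
    rw [norm_div, norm_mul, norm_pow]
    simp
  have hnorm2 : Summable fun n : ℕ => ‖(z/2) ^ n / (n.factorial : ℂ)‖ := by
    have := Real.summable_pow_div_factorial ‖z/2‖
    convert this using 2 with n
    rw [norm_div, norm_pow]
    simp
  have hCauchy : HasSum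
      (fun n : ℕ => ∑ k ∈ range (n+1),
        ((l k : ℂ) * (z/2) ^ k / (k.factorial : ℂ)) * ((z/2) ^ (n-k) / ((n-k).factorial : ℂ)))
      (L (z/2) * Complex.exp (z/2)) := by
    have h := hasSum_sum_range_mul_of_summable_norm hnorm1 hnorm2
    rwa [(hL (z/2)).tsum_eq, (hexp (z/2)).tsum_eq] at h
  have hC : HasSum
      (fun n : ℕ => (2:ℂ) ^ (1 - (n:ℤ)) * (∑ k ∈ range (n+1), (n.choose k : ℂ) * (l k : ℝ))
        * z ^ n / (n.factorial : ℂ))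
      (2 * (Complex.exp (z/2) * L (z/2))) := by
    have h := hCauchy.mul_left 2
    convert h using 2 with n
    · rfl
    · rw [Finset.mul_sum, Finset.sum_mul, Finset.sum_div, Finset.mul_sum]
      refine Finset.sum_congr rfl fun k hk => ?_
      have hkn : k ≤ n := by
        have := Finset.mem_range.mp hk
        omega
      have hchoose : (n.choose k : ℂ) = (n.factorial : ℂ) / ((k.factorial : ℂ) * ((n-k).factorial : ℂ)) :=
        Nat.cast_choose ℂ hkn
      have hzn : z ^ n = z ^ k * z ^ (n-k) := by rw [← pow_add, Nat.add_sub_cancel' hkn]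
      have h2n : (2:ℂ) ^ (1 - (n:ℤ)) = 2 / ((2:ℂ) ^ k * (2:ℂ) ^ (n-k)) := by
        rw [← pow_add, Nat.add_sub_cancel' hkn, zpow_sub₀ (two_ne_zero), zpow_one,
          zpow_natCast, div_eq_mul_inv]
      have hfk : (k.factorial : ℂ) ≠ 0 := Nat.cast_ne_zero.mpr k.factorial_ne_zero
      have hfnk : ((n-k).factorial : ℂ) ≠ 0 := Nat.cast_ne_zero.mpr (n-k).factorial_ne_zero
      have hfn : (n.factorial : ℂ) ≠ 0 := Nat.cast_ne_zero.mpr n.factorial_ne_zero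
      rw [hchoose, hzn, h2n, div_pow, div_pow]
      field_simp
    · rw [mul_comm (L (z/2))]
  -- the series z * e^{z/2}
  have hB : HasSum (fun n : ℕ => (n:ℂ) * (2:ℂ) ^ (1 - (n:ℤ)) * z ^ n / (n.factorial : ℂ))
      (z * Complex.exp (z/2)) := by
    have h := (hexp (z/2)).mul_left z
    have heq : (fun n : ℕ => ((n+1:ℕ):ℂ) * (2:ℂ) ^ (1 - ((n+1:ℕ):ℤ)) * z ^ (n+1) / ((n+1).factorial : ℂ))
        = fun n : ℕ => z * ((z/2) ^ n / (n.factorial : ℂ)) := by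
      funext n
      have h2 : (2:ℂ) ^ (1 - ((n+1:ℕ):ℤ)) = ((2:ℂ) ^ n)⁻¹ := by
        push_cast
        rw [show (1 - ((n:ℤ)+1)) = -(n:ℤ) by ring, zpow_neg, zpow_natCast]
      rw [h2, Nat.factorial_succ, div_pow]
      have hfn : ((n.factorial : ℂ)) ≠ 0 := Nat.cast_ne_zero.mpr n.factorial_ne_zero
      have h2n : ((2:ℂ) ^ n) ≠ 0 := pow_ne_zero _ two_ne_zero
      have hn1 : ((n:ℂ)+1) ≠ 0 := by
        have h' : ((n+1 : ℕ) : ℂ) ≠ 0 := Nat.cast_ne_zero.mpr (Nat.succ_ne_zero n)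
        push_cast at h'
        exact h'
      push_cast
      rw [div_eq_iff (mul_ne_zero hn1 hfn), div_div]
      field_simp
      ring
    have h2 : HasSum (fun n : ℕ => ((n+1:ℕ):ℂ) * (2:ℂ) ^ (1 - ((n+1:ℕ):ℤ)) * z ^ (n+1) / ((n+1).factorial : ℂ))
        (z * Complex.exp (z/2)) := by rw [heq]; exact h
    have h3 := (hasSum_nat_add_iff (f := fun n : ℕ => (n:ℂ) * (2:ℂ) ^ (1 - (n:ℤ)) * z ^ n / (n.factorial : ℂ)) 1).mp h2
    simpa using h3
  have hA := hexp z
  have hD : HasSum (fun n : ℕ => (if n = 0 then (-1:ℂ) else 0) + (if n = 2 then z^2/4 else 0))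
      (-1 + z^2/4) := (hasSum_ite_eq 0 (-1)).add (hasSum_ite_eq 2 (z^2/4))
  -- combined series for L'(z)
  have hT : HasSum (fun n : ℕ => (l (n+1) : ℂ) * z ^ n / (n.factorial : ℂ))
      (Complex.exp z - z * Complex.exp (z/2) + 2 * (Complex.exp (z/2) * L (z/2)) + (-1 + z^2/4)) := by
    have h := ((hA.sub hB).add hC).add hD
    convert h using 2 with n
    · rfl
    match n with
    | 0 => simp [h0, h1]
    | 1 => simp [h2, h0, h1, Finset.sum_range_succ]
    | 2 =>
      have : ((2:ℕ).choose 0 : ℂ) = 1 := by norm_num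
      simp [h3, h0, h1, h2, Finset.sum_range_succ]
      norm_num
      ring
    | (m+3) =>
      have hr := hrec (m+3) (by omega)
      have hcast : ((l (m+3+1) : ℝ) : ℂ) = 1 + (2:ℂ) ^ (1 - ((m+3:ℕ):ℤ))
          * ∑ k ∈ Finset.range (m+3+1), ((m+3).choose k : ℂ) * (l k : ℂ)
          - ((m+3:ℕ) : ℂ) * (2:ℂ) ^ (1 - ((m+3:ℕ):ℤ)) := by
        rw [hr]
        push_cast
        ring
      rw [hcast]
      simp only [show ¬(m+3 = 0) by omega, show ¬(m+3 = 2) by omega, if_neg, if_false]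
      push_cast
      ring
  -- termwise differentiation
  set R : ℝ := ‖z‖ + 1 with hRdef
  have hR : 0 < R := by positivity
  have hu : Summable (fun n : ℕ => |l n| * ((n:ℝ) * R ^ (n-1)) / n.factorial) :=
    aux_summable_deriv l hS R hR
  have hderiv_each : ∀ (n : ℕ) (w : ℂ),
      HasDerivAt (fun w : ℂ => (l n : ℂ) * w ^ n / (n.factorial : ℂ))
        ((l n : ℂ) * ((n:ℂ) * w ^ (n-1)) / (n.factorial : ℂ)) w := by
    intro n w
    exact ((hasDerivAt_pow n w).const_mul ((l n : ℂ))).div_const _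
  have hbound : ∀ (n : ℕ) (w : ℂ), w ∈ Metric.ball (0:ℂ) R →
      ‖(l n : ℂ) * ((n:ℂ) * w ^ (n-1)) / (n.factorial : ℂ)‖ ≤ |l n| * ((n:ℝ) * R ^ (n-1)) / n.factorial := by
    intro n w hw
    have hwR : ‖w‖ ≤ R := by
      have := Metric.mem_ball.mp hw
      rw [dist_zero_right] at this
      linarith
    calc ‖(l n : ℂ) * ((n:ℂ) * w ^ (n-1)) / (n.factorial : ℂ)‖
        = |l n| * ((n:ℝ) * ‖w‖ ^ (n-1)) / n.factorial := by
          simp [map_div₀, map_mul, map_pow]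
      _ ≤ |l n| * ((n:ℝ) * R ^ (n-1)) / n.factorial := by
          gcongr
  have hmain : HasDerivAt (fun y : ℂ => ∑' n : ℕ, (l n : ℂ) * y ^ n / (n.factorial : ℂ))
      (∑' n : ℕ, (l n : ℂ) * ((n:ℂ) * z ^ (n-1)) / (n.factorial : ℂ)) z := by
    refine hasDerivAt_tsum_of_isPreconnected hu Metric.isOpen_ball
      (convex_ball (0:ℂ) R).isPreconnected (fun n y _ => hderiv_each n y) hbound
      (Metric.mem_ball_self hR) (hS 0) ?_
    rw [Metric.mem_ball, dist_zero_right]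
    linarith
  have hLfun : (fun y : ℂ => ∑' n : ℕ, (l n : ℂ) * y ^ n / (n.factorial : ℂ)) = L :=
    funext fun y => (hL y).tsum_eq
  rw [hLfun] at hmain
  -- identify the derivative series
  have hg0 : (l 0 : ℂ) * ((0:ℂ) * z ^ (0-1)) / ((0).factorial : ℂ) = 0 := by simp
  have hshift : (fun n : ℕ => (l (n+1) : ℂ) * (((n+1:ℕ):ℂ) * z ^ ((n+1)-1)) / ((n+1).factorial : ℂ))
      = fun n : ℕ => (l (n+1) : ℂ) * z ^ n / (n.factorial : ℂ) := by
    funext n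
    rw [Nat.add_sub_cancel, Nat.factorial_succ]
    have hfn : ((n.factorial : ℂ)) ≠ 0 := Nat.cast_ne_zero.mpr n.factorial_ne_zero
    have hn1 : ((n+1 : ℕ) : ℂ) ≠ 0 := Nat.cast_ne_zero.mpr (Nat.succ_ne_zero n)
    push_cast
    push_cast at hn1
    field_simp
  have hT' : HasSum (fun n : ℕ => (l n : ℂ) * ((n:ℂ) * z ^ (n-1)) / (n.factorial : ℂ))
      (Complex.exp z - z * Complex.exp (z/2) + 2 * (Complex.exp (z/2) * L (z/2)) + (-1 + z^2/4)) := by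
    have h2 : HasSum (fun n : ℕ => (l (n+1) : ℂ) * (((n+1:ℕ):ℂ) * z ^ ((n+1)-1)) / ((n+1).factorial : ℂ))
        (Complex.exp z - z * Complex.exp (z/2) + 2 * (Complex.exp (z/2) * L (z/2)) + (-1 + z^2/4)) := by
      rw [hshift]; exact hT
    have h3 := (hasSum_nat_add_iff
      (f := fun n : ℕ => (l n : ℂ) * ((n:ℂ) * z ^ (n-1)) / (n.factorial : ℂ)) 1).mp h2
    simpa using h3
  rw [hT'.tsum_eq] at hmain
  -- assemble the product rule
  have hexpneg : HasDerivAt (fun w : ℂ => Complex.exp (-w)) (Complex.exp (-z) * (-1)) z :=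
    (hasDerivAt_neg z).cexp
  have hfinal := hexpneg.mul hmain
  have e1 : Complex.exp (-z) * Complex.exp z = 1 := by
    rw [← Complex.exp_add]; simp
  have e2 : Complex.exp (-z) * Complex.exp (z/2) = Complex.exp (-(z/2)) := by
    rw [← Complex.exp_add]; ring_nf
  convert hfinal using 1
  · rfl
  · rfl
  · rfl
  rw [neg_div]
  linear_combination (-1 : ℂ) * e1 + (z - 2 * (L (z/2))) * e2
end

section
/- For every integer n ≥ 1, the coefficients m_n of the Poisson generating function satisfy the recurrence m_{n+1} = −(1 − 2^{1-n})·m_n + n·(−1)^n·2^{1-n} − (−1)^n + (n(n−1)/4)·(−1)^n. -/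
open Finset

private lemma tp (j : ℕ) : (2:ℝ) ^ (1 - (j:ℤ)) = 2 * (2⁻¹:ℝ)^j := by
  rw [zpow_sub₀ (by norm_num : (2:ℝ) ≠ 0), zpow_one, zpow_natCast, div_eq_mul_inv, inv_pow]

private lemma negpow {n k : ℕ} (h : k ≤ n) : ((-1:ℝ))^(n-k) = (-1)^n * (-1)^k := by
  have h1 : ((-1:ℝ))^(n-k) * (-1)^k = (-1)^n := by
    rw [← pow_add, Nat.sub_add_cancel h]
  have h2 : ((-1:ℝ))^k * (-1)^k = 1 := by rw [← mul_pow]; norm_num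
  calc ((-1:ℝ))^(n-k) = (-1)^(n-k) * ((-1)^k * (-1)^k) := by rw [h2, mul_one]
    _ = ((-1)^(n-k) * (-1)^k) * (-1)^k := by ring
    _ = (-1)^n * (-1)^k := by rw [h1]

private lemma binom_sum (x : ℝ) (p : ℕ) :
    ∑ i ∈ range (p+1), (p.choose i : ℝ) * x^i * (-1:ℝ)^(p-i) = (x - 1)^p := by
  rw [sub_eq_add_neg, add_pow]
  exact Finset.sum_congr rfl fun i _ => by ring

private lemma lemA {n : ℕ} (hn : 1 ≤ n) :
    ∑ j ∈ range (n+1), (n.choose j : ℝ) * (-1:ℝ)^(n-j) = 0 := by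
  have h := binom_sum 1 n
  simp only [one_pow, mul_one, sub_self] at h
  rw [h, zero_pow (by omega : n ≠ 0)]

private lemma tp' (i : ℕ) : (2:ℝ) ^ (1 - ((i:ℤ)+1)) = (2⁻¹:ℝ)^i := by
  rw [show (1 - ((i:ℤ)+1)) = -(i:ℤ) by ring, zpow_neg, zpow_natCast, inv_pow]

private lemma lemB {n : ℕ} (hn : 1 ≤ n) :
    ∑ j ∈ range (n+1), (n.choose j : ℝ) * (-1:ℝ)^(n-j) * (j:ℝ) * (2:ℝ)^(1-(j:ℤ))
      = (n:ℝ) * (-1:ℝ)^(n-1) * (2:ℝ)^(1-(n:ℤ)) := by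
  obtain ⟨p, rfl⟩ : ∃ p, n = p + 1 := ⟨n - 1, by omega⟩
  rw [Finset.sum_range_succ']
  have hz : ((p+1).choose 0 : ℝ) * (-1:ℝ)^(p+1-0) * ((0:ℕ):ℝ) * (2:ℝ)^(1-((0:ℕ):ℤ)) = 0 := by
    norm_num
  rw [hz, add_zero]
  have hterm : ∀ i ∈ range (p+1),
      ((p+1).choose (i+1) : ℝ) * (-1:ℝ)^(p+1-(i+1)) * ((i+1:ℕ):ℝ) * (2:ℝ)^(1-((i+1:ℕ):ℤ))
        = ((p:ℝ)+1) * ((p.choose i : ℝ) * (2⁻¹:ℝ)^i * (-1:ℝ)^(p-i)) := by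
    intro i _
    have hc : ((p+1).choose (i+1) : ℝ) * ((i:ℝ)+1) = ((p:ℝ)+1) * (p.choose i : ℝ) := by
      have h2 : ((p+1) * p.choose i : ℕ) = ((p+1).choose (i+1) * (i+1) : ℕ) :=
        Nat.add_one_mul_choose_eq p i
      have h3 : ((p:ℝ)+1) * (p.choose i : ℝ) = ((p+1).choose (i+1) : ℝ) * ((i:ℝ)+1) := by
        exact_mod_cast h2
      linarith [h3]
    have he : (1 - ((i+1:ℕ):ℤ)) = 1 - ((i:ℤ)+1) := by push_cast; ring
    rw [Nat.succ_sub_succ, he, tp']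
    push_cast
    linear_combination ((-1:ℝ)^(p-i) * (2⁻¹:ℝ)^i) * hc
  rw [Finset.sum_congr rfl hterm, ← Finset.mul_sum, binom_sum]
  rw [show ((p+1:ℕ):ℤ) = (p:ℤ)+1 by push_cast; ring, tp']
  rw [show (2⁻¹ - 1 : ℝ) = (-1) * 2⁻¹ by norm_num, mul_pow]
  push_cast
  ring

private lemma lemInner (n k : ℕ) (hk : k ≤ n) :
    ∑ j ∈ range (n+1), (n.choose j : ℝ) * (j.choose k : ℝ) * (-1:ℝ)^(n-j) * (2⁻¹:ℝ)^j
      = (n.choose k : ℝ) * (-1:ℝ)^(n-k) * (2⁻¹:ℝ)^n := by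
  rw [Finset.range_eq_Ico, ← Finset.sum_Ico_consecutive _ (Nat.zero_le k) (by omega : k ≤ n+1)]
  have h0 : ∑ j ∈ Ico 0 k, (n.choose j : ℝ) * (j.choose k : ℝ) * (-1:ℝ)^(n-j) * (2⁻¹:ℝ)^j = 0 := by
    apply Finset.sum_eq_zero
    intro j hj
    have : j < k := (Finset.mem_Ico.mp hj).2
    simp [Nat.choose_eq_zero_of_lt this]
  rw [h0, zero_add, Finset.sum_Ico_eq_sum_range]
  have hrange : n + 1 - k = (n - k) + 1 := by omega
  rw [hrange]
  have hterm : ∀ i ∈ range ((n-k)+1),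
      (n.choose (k+i) : ℝ) * ((k+i).choose k : ℝ) * (-1:ℝ)^(n-(k+i)) * (2⁻¹:ℝ)^(k+i)
        = ((n.choose k : ℝ) * (2⁻¹:ℝ)^k) * (((n-k).choose i : ℝ) * (2⁻¹:ℝ)^i * (-1:ℝ)^((n-k)-i)) := by
    intro i hi
    have hik : i ≤ n - k := by simpa [Nat.lt_succ_iff] using hi
    have h1 : k + i ≤ n := by omega
    have hmul := Nat.choose_mul (n := n) (Nat.le_add_right k i)
    have hmul' : (n.choose (k+i) * (k+i).choose k : ℕ) = (n.choose k * (n-k).choose i : ℕ) := by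
      simpa using hmul
    have hcast : (n.choose (k+i) : ℝ) * ((k+i).choose k : ℝ) = (n.choose k : ℝ) * ((n-k).choose i : ℝ) := by
      exact_mod_cast congrArg (Nat.cast (R := ℝ)) hmul'
    have hsub : n - (k+i) = (n-k) - i := by omega
    rw [hsub, pow_add, hcast]
    ring
  rw [Finset.sum_congr rfl hterm, ← Finset.mul_sum, binom_sum]
  rw [show (2⁻¹ - 1 : ℝ) = (-1) * 2⁻¹ by norm_num, mul_pow]
  have hpow : (2⁻¹:ℝ)^k * (2⁻¹:ℝ)^(n-k) = (2⁻¹:ℝ)^n := by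
    rw [← pow_add, Nat.add_sub_cancel' hk]
  linear_combination ((-1:ℝ)^(n-k) * (n.choose k : ℝ)) * hpow

private lemma lemC (l m : ℕ → ℝ)
    (hm : ∀ n : ℕ, m n = ∑ k ∈ range (n+1), (n.choose k : ℝ) * (-1)^(n-k) * l k) (n : ℕ) :
    ∑ j ∈ range (n+1), (n.choose j : ℝ) * (-1:ℝ)^(n-j) * (2:ℝ)^(1-(j:ℤ)) *
        (∑ k ∈ range (j+1), (j.choose k : ℝ) * l k)
      = (2:ℝ)^(1-(n:ℤ)) * m n := by
  have hterm : ∀ j ∈ range (n+1),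
      (n.choose j : ℝ) * (-1:ℝ)^(n-j) * (2:ℝ)^(1-(j:ℤ)) *
        (∑ k ∈ range (j+1), (j.choose k : ℝ) * l k)
      = ∑ k ∈ range (n+1), 2 * ((n.choose j : ℝ) * (j.choose k : ℝ) * (-1:ℝ)^(n-j) * (2⁻¹:ℝ)^j) * l k := by
    intro j hj
    have hjn : j + 1 ≤ n + 1 := by simpa [Nat.lt_succ_iff] using hj
    have hext : ∑ k ∈ range (j+1), (j.choose k : ℝ) * l k
        = ∑ k ∈ range (n+1), (j.choose k : ℝ) * l k := by
      apply Finset.sum_subset (Finset.range_subset_range.mpr hjn)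
      intro k _ hk
      have : j < k := by simpa [Nat.lt_succ_iff] using hk
      simp [Nat.choose_eq_zero_of_lt this]
    rw [hext, tp, Finset.mul_sum]
    exact Finset.sum_congr rfl fun k _ => by ring
  rw [Finset.sum_congr rfl hterm, Finset.sum_comm]
  have hinner : ∀ k ∈ range (n+1),
      ∑ j ∈ range (n+1), 2 * ((n.choose j : ℝ) * (j.choose k : ℝ) * (-1:ℝ)^(n-j) * (2⁻¹:ℝ)^j) * l k
        = 2 * (2⁻¹:ℝ)^n * ((n.choose k : ℝ) * (-1:ℝ)^(n-k) * l k) := by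
    intro k hk
    have hkn : k ≤ n := by simpa [Nat.lt_succ_iff] using hk
    have : ∑ j ∈ range (n+1), 2 * ((n.choose j : ℝ) * (j.choose k : ℝ) * (-1:ℝ)^(n-j) * (2⁻¹:ℝ)^j) * l k
        = (2 * l k) * ∑ j ∈ range (n+1), (n.choose j : ℝ) * (j.choose k : ℝ) * (-1:ℝ)^(n-j) * (2⁻¹:ℝ)^j := by
      rw [Finset.mul_sum]
      exact Finset.sum_congr rfl fun j _ => by ring
    rw [this, lemInner n k hkn]
    ring
  rw [Finset.sum_congr rfl hinner, ← Finset.mul_sum, hm n, tp]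

private lemma lemL (f : ℕ → ℝ) (n : ℕ) :
    ∑ k ∈ range (n+2), ((n+1).choose k : ℝ) * (-1:ℝ)^k * f k
      = (∑ k ∈ range (n+1), (n.choose k : ℝ) * (-1:ℝ)^k * f k)
        - ∑ k ∈ range (n+1), (n.choose k : ℝ) * (-1:ℝ)^k * f (k+1) := by
  have h1 : ∑ k ∈ range (n+2), ((n+1).choose k : ℝ) * (-1:ℝ)^k * f k
      = (∑ i ∈ range (n+1), ((n.choose i : ℝ) + (n.choose (i+1) : ℝ)) * (-1:ℝ)^(i+1) * f (i+1)) + f 0 := by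
    rw [Finset.sum_range_succ']
    simp [Nat.choose_succ_succ]
  have h2 : ∑ k ∈ range (n+1), (n.choose k : ℝ) * (-1:ℝ)^k * f k
      = (∑ i ∈ range n, (n.choose (i+1) : ℝ) * (-1:ℝ)^(i+1) * f (i+1)) + f 0 := by
    rw [Finset.sum_range_succ']
    simp
  have h3 : ∑ i ∈ range (n+1), (n.choose (i+1) : ℝ) * (-1:ℝ)^(i+1) * f (i+1)
      = ∑ i ∈ range n, (n.choose (i+1) : ℝ) * (-1:ℝ)^(i+1) * f (i+1) := by
    rw [Finset.sum_range_succ]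
    simp
  have h4 : ∀ i ∈ range (n+1), ((n.choose i : ℝ) + (n.choose (i+1) : ℝ)) * (-1:ℝ)^(i+1) * f (i+1)
      = (n.choose (i+1) : ℝ) * (-1:ℝ)^(i+1) * f (i+1) - (n.choose i : ℝ) * (-1:ℝ)^i * f (i+1) := by
    intro i _
    rw [pow_succ]
    ring
  rw [h1, h2, Finset.sum_congr rfl h4, Finset.sum_sub_distrib, h3]
  ring

private lemma step0 (l m : ℕ → ℝ)
    (hm : ∀ n : ℕ, m n = ∑ k ∈ range (n+1), (n.choose k : ℝ) * (-1)^(n-k) * l k) (n : ℕ) :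
    m (n+1) + m n = ∑ j ∈ range (n+1), (n.choose j : ℝ) * (-1:ℝ)^(n-j) * l (j+1) := by
  have e1 : m (n+1) = (-1:ℝ)^(n+1) * ∑ k ∈ range (n+2), ((n+1).choose k : ℝ) * (-1:ℝ)^k * l k := by
    rw [hm, Finset.mul_sum]
    refine Finset.sum_congr rfl fun k hk => ?_
    rw [negpow (Nat.lt_succ_iff.mp (Finset.mem_range.mp hk))]
    ring
  have e2 : m n = (-1:ℝ)^n * ∑ k ∈ range (n+1), (n.choose k : ℝ) * (-1:ℝ)^k * l k := by
    rw [hm, Finset.mul_sum]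
    refine Finset.sum_congr rfl fun k hk => ?_
    rw [negpow (Nat.lt_succ_iff.mp (Finset.mem_range.mp hk))]
    ring
  have e3 : ∑ j ∈ range (n+1), (n.choose j : ℝ) * (-1:ℝ)^(n-j) * l (j+1)
      = (-1:ℝ)^n * ∑ k ∈ range (n+1), (n.choose k : ℝ) * (-1:ℝ)^k * l (k+1) := by
    rw [Finset.mul_sum]
    refine Finset.sum_congr rfl fun k hk => ?_
    rw [negpow (Nat.lt_succ_iff.mp (Finset.mem_range.mp hk))]
    ring
  rw [e1, e2, e3, lemL l n, pow_succ]
  ring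

/-- The Taylor coefficients `m_n` of the Poisson generating function satisfy, for `n ≥ 1`,
`m_{n+1} = -(1-2^{1-n}) m_n + n(-1)^n 2^{1-n} - (-1)^n + (n(n-1)/4)(-1)^n`. -/
theorem dst_poisson_coeff_recurrence
    (l : ℕ → ℝ)
    (h0 : l 0 = 0) (h1 : l 1 = 0) (h2 : l 2 = 0) (h3 : l 3 = 1/2)
    (hrec : ∀ n : ℕ, 3 ≤ n →
      l (n+1) = 1 + (2:ℝ) ^ (1 - (n:ℤ)) * ∑ k ∈ Finset.range (n+1), (n.choose k : ℝ) * l k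
        - (n : ℝ) * (2:ℝ) ^ (1 - (n:ℤ)))
    (m : ℕ → ℝ)
    (hm : ∀ n : ℕ, m n = ∑ k ∈ Finset.range (n+1), (n.choose k : ℝ) * (-1)^(n-k) * l k) :
    ∀ n : ℕ, 1 ≤ n →
      m (n+1) = -(1 - (2:ℝ) ^ (1 - (n:ℤ))) * m n + (n:ℝ) * (-1)^n * (2:ℝ) ^ (1 - (n:ℤ))
        - (-1)^n + ((n:ℝ) * ((n:ℝ) - 1) / 4) * (-1)^n := by
  intro n hn
  rcases Nat.lt_or_ge n 2 with h2n | h2n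
  · -- n = 1
    have hn1 : n = 1 := by omega
    subst hn1
    have hm1 := hm 1
    have hm2 := hm 2
    simp [Finset.sum_range_succ, h0, h1, h2] at hm1 hm2
    rw [hm2]
    norm_num [hm1]
  · -- n ≥ 2
    have hstep := step0 l m hm n
    -- split off the exceptional terms
    have hsub : ({0, 2} : Finset ℕ) ⊆ range (n+1) := by
      intro j hj
      simp only [Finset.mem_insert, Finset.mem_singleton] at hj
      rcases hj with rfl | rfl <;> simp only [Finset.mem_range] <;> omega
    have hsplit : ∑ j ∈ range (n+1), (n.choose j : ℝ) * (-1:ℝ)^(n-j) *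
        (l (j+1) - (1 + (2:ℝ)^(1-(j:ℤ)) * (∑ k ∈ range (j+1), (j.choose k : ℝ) * l k)
          - (j:ℝ) * (2:ℝ)^(1-(j:ℤ))))
        = -(-1:ℝ)^n + (n.choose 2 : ℝ) * (-1:ℝ)^(n-2) * (1/2) := by
      rw [← Finset.sum_subset hsub]
      · rw [Finset.sum_insert (by norm_num), Finset.sum_singleton]
        norm_num [Finset.sum_range_succ, h0, h1, h2, h3]
      · intro j hjr hj
        simp only [Finset.mem_insert, Finset.mem_singleton] at hj
        push_neg at hj
        rcases Nat.lt_or_ge j 3 with hj3 | hj3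
        · interval_cases j
          · exact absurd rfl hj.1
          · norm_num [Finset.sum_range_succ, h0, h1, h2]
          · exact absurd rfl hj.2
        · rw [hrec j hj3]
          ring
    have hexpand : ∀ j ∈ range (n+1), (n.choose j : ℝ) * (-1:ℝ)^(n-j) *
        (l (j+1) - (1 + (2:ℝ)^(1-(j:ℤ)) * (∑ k ∈ range (j+1), (j.choose k : ℝ) * l k)
          - (j:ℝ) * (2:ℝ)^(1-(j:ℤ))))
        = (n.choose j : ℝ) * (-1:ℝ)^(n-j) * l (j+1)
          - ((n.choose j : ℝ) * (-1:ℝ)^(n-j)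
            + (n.choose j : ℝ) * (-1:ℝ)^(n-j) * (2:ℝ)^(1-(j:ℤ)) *
              (∑ k ∈ range (j+1), (j.choose k : ℝ) * l k)
            - (n.choose j : ℝ) * (-1:ℝ)^(n-j) * (j:ℝ) * (2:ℝ)^(1-(j:ℤ))) := by
      intro j _
      ring
    rw [Finset.sum_congr rfl hexpand, Finset.sum_sub_distrib, ← hstep,
        Finset.sum_sub_distrib, Finset.sum_add_distrib, lemA hn, lemB hn, lemC l m hm n] at hsplit
    have s1 : (-1:ℝ)^(n-1) = (-1:ℝ)^n * (-1:ℝ)^1 := negpow hn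
    have s2 : (-1:ℝ)^(n-2) = (-1:ℝ)^n * (-1:ℝ)^2 := negpow h2n
    have sc : (n.choose 2 : ℝ) = (n:ℝ) * ((n:ℝ) - 1) / 2 := Nat.cast_choose_two (K := ℝ) n
    rw [s1, s2, sc] at hsplit
    linear_combination hsplit
end

section
/- For every integer N ≥ 1, one has m_{N+1}·(−1)^N / Q_{N-1} = ∑_{n=2}^{N} (n·2^{1-n} − 1 + n(n−1)/4)/Q_{n-1}. -/
open Finset

lemma dst_binom_sum (x : ℝ) (n : ℕ) :
    ∑ j ∈ Finset.range (n+1), (n.choose j : ℝ) * x ^ j = (1 + x) ^ n := by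
  rw [add_comm 1 x, add_pow]
  exact Finset.sum_congr rfl fun j _ => by rw [one_pow]; ring

lemma dst_binom_sum_mul (x : ℝ) (n : ℕ) (hn : 1 ≤ n) :
    ∑ j ∈ Finset.range (n+1), (j:ℝ) * (n.choose j : ℝ) * x ^ j
      = (n:ℝ) * x * (1 + x) ^ (n-1) := by
  obtain ⟨p, rfl⟩ : ∃ p, n = p + 1 := ⟨n-1, by omega⟩
  rw [Finset.sum_range_succ']
  simp only [Nat.cast_zero, zero_mul, add_zero, Nat.add_sub_cancel]
  rw [← dst_binom_sum x p, Finset.mul_sum]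
  apply Finset.sum_congr rfl
  intro i _
  have h' : ((p:ℝ)+1) * (p.choose i : ℝ) = ((p+1).choose (i+1) : ℝ) * ((i:ℝ)+1) := by
    exact_mod_cast congrArg (Nat.cast (R := ℝ)) (Nat.add_one_mul_choose_eq p i)
  push_cast
  rw [pow_succ]
  linear_combination (-(x ^ i * x)) * h'

lemma dst_binom_double (x : ℝ) (n k : ℕ) (hk : k ≤ n) :
    ∑ j ∈ Finset.range (n+1), (n.choose j : ℝ) * (j.choose k : ℝ) * x ^ j
      = (n.choose k : ℝ) * x ^ k * (1 + x) ^ (n - k) := by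
  rw [Finset.range_eq_Ico,
    ← Finset.sum_Ico_consecutive _ (Nat.zero_le k) (by omega : k ≤ n+1)]
  have h1 : ∑ j ∈ Finset.Ico 0 k, (n.choose j : ℝ) * (j.choose k : ℝ) * x ^ j = 0 := by
    apply Finset.sum_eq_zero
    intro j hj
    simp [Nat.choose_eq_zero_of_lt (Finset.mem_Ico.mp hj).2]
  rw [h1, zero_add, Finset.sum_Ico_eq_sum_range]
  have h2 : n + 1 - k = (n - k) + 1 := by omega
  rw [h2, ← dst_binom_sum x (n-k), Finset.mul_sum]
  apply Finset.sum_congr rfl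
  intro i hi
  have hi' : i ≤ n - k := Nat.lt_succ_iff.mp (Finset.mem_range.mp hi)
  have hkin : k + i ≤ n := by omega
  have hch := Nat.choose_mul (n := n) (k := k + i) (s := k) (Nat.le_add_right k i)
  have hch' : (n.choose (k+i) : ℝ) * ((k+i).choose k : ℝ)
      = (n.choose k : ℝ) * ((n-k).choose (k+i-k) : ℝ) := by exact_mod_cast congrArg (Nat.cast (R := ℝ)) hch
  rw [Nat.add_sub_cancel_left] at hch'
  rw [pow_add]
  linear_combination (x ^ k * x ^ i) * hch'


lemma dst_binom_double_sum (x : ℝ) (n : ℕ) (f : ℕ → ℝ) :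
    ∑ j ∈ Finset.range (n+1), (n.choose j : ℝ) * x ^ j *
        ∑ k ∈ Finset.range (j+1), (j.choose k : ℝ) * f k
      = ∑ k ∈ Finset.range (n+1), (n.choose k : ℝ) * x ^ k * (1+x) ^ (n-k) * f k := by
  have step1 : ∀ j ∈ Finset.range (n+1),
      (n.choose j : ℝ) * x ^ j * ∑ k ∈ Finset.range (j+1), (j.choose k : ℝ) * f k
      = ∑ k ∈ Finset.range (n+1), (n.choose j : ℝ) * (j.choose k : ℝ) * x ^ j * f k := by
    intro j hj
    have hj' : j + 1 ≤ n + 1 := Finset.mem_range.mp hj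
    rw [Finset.mul_sum, Finset.sum_subset (Finset.range_subset_range.mpr hj')]
    · exact Finset.sum_congr rfl (fun k _ => by ring)
    · intro k _ hk2
      have hjk : j < k := by
        have := Finset.mem_range.not.mp hk2
        omega
      simp [Nat.choose_eq_zero_of_lt hjk]
  rw [Finset.sum_congr rfl step1, Finset.sum_comm]
  apply Finset.sum_congr rfl
  intro k hk
  have hk' : k ≤ n := Nat.lt_succ_iff.mp (Finset.mem_range.mp hk)
  rw [← Finset.sum_mul, dst_binom_double x n k hk']

lemma dst_one_sub_pos (n : ℕ) (hn : 1 ≤ n) : 0 < 1 - (2:ℝ) ^ (-(n:ℤ)) := by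
  have h1 : (2:ℝ) ^ (-(n:ℤ)) = ((2:ℝ) ^ n)⁻¹ := by rw [zpow_neg, zpow_natCast]
  have h2 : (1:ℝ) < 2 ^ n := by
    apply one_lt_pow₀ (by norm_num) (by omega)
  have h3 : ((2:ℝ) ^ n)⁻¹ < 1 := inv_lt_one_of_one_lt₀ h2
  rw [h1]; linarith

lemma dst_Q_pos (n : ℕ) : 0 < Q n := by
  apply Finset.prod_pos
  intro k hk
  exact dst_one_sub_pos k (Finset.mem_Icc.mp hk).1

lemma dst_Q_succ (N : ℕ) : Q (N+1) = Q N * (1 - (2:ℝ) ^ (-((N+1:ℕ):ℤ))) :=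
  Finset.prod_Icc_succ_top (by omega) _

lemma dst_hm_alt (l m : ℕ → ℝ)
    (hm : ∀ n : ℕ, m n = ∑ k ∈ Finset.range (n+1), (n.choose k : ℝ) * (-1)^(n-k) * l k) :
    ∀ n : ℕ, m n = (-1:ℝ)^n * ∑ k ∈ Finset.range (n+1), (n.choose k : ℝ) * (-1)^k * l k := by
  intro n
  rw [hm n, Finset.mul_sum]
  refine Finset.sum_congr rfl fun k hk => ?_
  have hk' : k ≤ n := Nat.lt_succ_iff.mp (Finset.mem_range.mp hk)
  have h1 : ((-1:ℝ))^(n-k) * (-1)^k = (-1)^n := by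
    rw [← pow_add, Nat.sub_add_cancel hk']
  have h2 : ((-1:ℝ))^k * (-1)^k = 1 := by
    rw [← pow_add, ← two_mul, pow_mul]; norm_num
  linear_combination ((n.choose k : ℝ) * l k * (-1:ℝ)^k) * h1
    + (-(n.choose k : ℝ) * l k * (-1:ℝ)^(n-k)) * h2

lemma dst_Mrec
    (l : ℕ → ℝ)
    (h0 : l 0 = 0) (h1 : l 1 = 0) (h2 : l 2 = 0) (h3 : l 3 = 1/2)
    (hrec : ∀ n : ℕ, 3 ≤ n →
      l (n+1) = 1 + (2:ℝ) ^ (1 - (n:ℤ)) * ∑ k ∈ Finset.range (n+1), (n.choose k : ℝ) * l k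
        - (n : ℝ) * (2:ℝ) ^ (1 - (n:ℤ)))
    (n : ℕ) (hn : 2 ≤ n) :
    ∑ k ∈ Finset.range (n+2), ((n+1).choose k : ℝ) * (-1)^k * l k
      = (1 - (2:ℝ) ^ (1 - (n:ℤ))) *
          (∑ k ∈ Finset.range (n+1), (n.choose k : ℝ) * (-1)^k * l k)
        - ((n:ℝ) * (2:ℝ) ^ (1 - (n:ℤ)) - 1 + (n:ℝ) * ((n:ℝ)-1) / 4) := by
  have hn1 : 1 ≤ n := by omega
  have key : ∀ j : ℕ, ((-1:ℝ))^j * (2:ℝ) ^ (1 - (j:ℤ)) = 2 * ((-1)/2:ℝ)^j := by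
    intro j
    have h2' : (2:ℝ) ^ (1 - (j:ℤ)) = 2 * ((2:ℝ)^j)⁻¹ := by
      rw [show (1-(j:ℤ)) = 1 + (-(j:ℤ)) by ring,
        zpow_add₀ (by norm_num : (2:ℝ) ≠ 0), zpow_one, zpow_neg, zpow_natCast]
    rw [h2', show ((-1)/2 : ℝ) = (-1) * (2:ℝ)⁻¹ by norm_num, mul_pow, inv_pow]
    ring
  -- Pascal step
  have pascal : ∑ k ∈ Finset.range (n+2), ((n+1).choose k : ℝ) * (-1)^k * l k
      = (∑ k ∈ Finset.range (n+1), (n.choose k : ℝ) * (-1)^k * l k)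
        - ∑ j ∈ Finset.range (n+1), (n.choose j : ℝ) * (-1)^j * l (j+1) := by
    rw [Finset.sum_range_succ']
    have hstep : ∀ i ∈ Finset.range (n+1),
        ((n+1).choose (i+1) : ℝ) * (-1)^(i+1) * l (i+1)
        = (n.choose (i+1) : ℝ) * (-1)^(i+1) * l (i+1)
          - (n.choose i : ℝ) * (-1)^i * l (i+1) := by
      intro i _
      rw [Nat.choose_succ_succ]
      push_cast
      ring
    rw [Finset.sum_congr rfl hstep, Finset.sum_sub_distrib]
    have hleft : ∑ i ∈ Finset.range (n+1), (n.choose (i+1) : ℝ) * (-1)^(i+1) * l (i+1)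
        = ∑ k ∈ Finset.range (n+1), (n.choose k : ℝ) * (-1)^k * l k := by
      rw [Finset.sum_range_succ, Nat.choose_succ_self]
      conv_rhs => rw [Finset.sum_range_succ']
      simp [h0]
    rw [hleft]
    simp [h0]
  -- value of the shifted sum
  have hT : ∑ j ∈ Finset.range (n+1), (n.choose j : ℝ) * (-1)^j * l (j+1)
      = (2:ℝ) ^ (1 - (n:ℤ)) *
          (∑ k ∈ Finset.range (n+1), (n.choose k : ℝ) * (-1)^k * l k)
        + ((n:ℝ) * (2:ℝ) ^ (1 - (n:ℤ)) - 1 + (n:ℝ) * ((n:ℝ)-1) / 4) := by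
    have expand : ∀ j ∈ Finset.range (n+1),
        (n.choose j : ℝ) * (-1)^j * l (j+1)
        = ((n.choose j : ℝ) * (-1)^j *
              (l (j+1) - (1 - (j:ℝ) * (2:ℝ) ^ (1 - (j:ℤ))
                + (2:ℝ) ^ (1 - (j:ℤ)) * ∑ k ∈ Finset.range (j+1), (j.choose k : ℝ) * l k)))
          + ((n.choose j : ℝ) * (-1)^j)
          + ((-2) * ((j:ℝ) * (n.choose j : ℝ) * ((-1)/2:ℝ)^j))
          + (2 * ((n.choose j : ℝ) * ((-1)/2:ℝ)^j
              * ∑ k ∈ Finset.range (j+1), (j.choose k : ℝ) * l k)) := by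
      intro j _
      linear_combination ((n.choose j : ℝ) *
        ((∑ k ∈ Finset.range (j+1), (j.choose k : ℝ) * l k) - (j:ℝ))) * key j
    rw [Finset.sum_congr rfl expand, Finset.sum_add_distrib, Finset.sum_add_distrib,
      Finset.sum_add_distrib]
    have hs1 : ∑ j ∈ Finset.range (n+1), (n.choose j : ℝ) * (-1)^j *
          (l (j+1) - (1 - (j:ℝ) * (2:ℝ) ^ (1 - (j:ℤ))
            + (2:ℝ) ^ (1 - (j:ℤ)) * ∑ k ∈ Finset.range (j+1), (j.choose k : ℝ) * l k))
        = -1 + (n.choose 2 : ℝ) / 2 := by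
      rw [show Finset.range (n+1) = Finset.Ico 0 (n+1) by rw [Finset.range_eq_Ico],
        ← Finset.sum_Ico_consecutive _ (by omega : (0:ℕ) ≤ 3) (by omega : 3 ≤ n+1)]
      have htail : ∑ j ∈ Finset.Ico 3 (n+1), (n.choose j : ℝ) * (-1)^j *
          (l (j+1) - (1 - (j:ℝ) * (2:ℝ) ^ (1 - (j:ℤ))
            + (2:ℝ) ^ (1 - (j:ℤ)) * ∑ k ∈ Finset.range (j+1), (j.choose k : ℝ) * l k)) = 0 := by
        apply Finset.sum_eq_zero
        intro j hj
        rw [hrec j (Finset.mem_Ico.mp hj).1]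
        ring
      rw [htail, add_zero, show Finset.Ico 0 3 = Finset.range 3 by rw [Finset.range_eq_Ico]]
      rw [Finset.sum_range_succ, Finset.sum_range_succ, Finset.sum_range_one]
      norm_num [Finset.sum_range_succ, h0, h1, h2, h3]
      ring
    have hs2 : ∑ j ∈ Finset.range (n+1), (n.choose j : ℝ) * (-1)^j = 0 := by
      rw [dst_binom_sum (-1 : ℝ) n, show (1 + (-1:ℝ)) = 0 by norm_num,
        zero_pow (by omega : n ≠ 0)]
    have hs3 : ∑ j ∈ Finset.range (n+1), (-2:ℝ) * ((j:ℝ) * (n.choose j : ℝ) * ((-1)/2:ℝ)^j)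
        = (n:ℝ) * (2:ℝ) ^ (1 - (n:ℤ)) := by
      rw [← Finset.mul_sum, dst_binom_sum_mul ((-1)/2) n hn1,
        show ((1:ℝ) + (-1)/2) = 1/2 by norm_num]
      have hhp : ((1:ℝ)/2)^(n-1) = (2:ℝ) ^ (1 - (n:ℤ)) := by
        rw [one_div, inv_pow, ← zpow_natCast (2:ℝ), ← zpow_neg]
        congr 1
        omega
      rw [hhp]; ring
    have hs4 : ∑ j ∈ Finset.range (n+1), 2 * ((n.choose j : ℝ) * ((-1)/2:ℝ)^j
          * ∑ k ∈ Finset.range (j+1), (j.choose k : ℝ) * l k)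
        = (2:ℝ) ^ (1 - (n:ℤ)) *
            ∑ k ∈ Finset.range (n+1), (n.choose k : ℝ) * (-1)^k * l k := by
      rw [← Finset.mul_sum, dst_binom_double_sum ((-1)/2) n l, Finset.mul_sum, Finset.mul_sum]
      apply Finset.sum_congr rfl
      intro k hk
      have hk' : k ≤ n := Nat.lt_succ_iff.mp (Finset.mem_range.mp hk)
      rw [show ((1:ℝ) + (-1)/2) = 1/2 by norm_num]
      have e2 : (((-1)/2:ℝ))^k * ((1:ℝ)/2)^(n-k) = (-1)^k * ((1:ℝ)/2)^n := by
        rw [show ((-1)/2:ℝ) = (-1) * (1/2) by norm_num, mul_pow, mul_assoc, ← pow_add,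
          Nat.add_sub_cancel' hk']
      have e3 : 2 * ((1:ℝ)/2)^n = (2:ℝ) ^ (1 - (n:ℤ)) := by
        rw [one_div, inv_pow, ← zpow_natCast (2:ℝ), ← zpow_neg,
          show (1-(n:ℤ)) = 1 + -(n:ℤ) by ring,
          zpow_add₀ (by norm_num : (2:ℝ) ≠ 0), zpow_one]
      linear_combination (2 * (n.choose k : ℝ) * l k) * e2
        + ((n.choose k : ℝ) * (-1:ℝ)^k * l k) * e3
    rw [hs1, hs2, hs3, hs4]
    have hch : (n.choose 2 : ℝ) * 2 = (n:ℝ) * ((n:ℝ) - 1) := by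
      have h2' : n.choose 2 * 2 = n * (n - 1) := by
        rw [Nat.choose_two_right]
        apply Nat.div_mul_cancel
        exact (Nat.even_mul_pred_self n).two_dvd
      have hc := congrArg (fun t : ℕ => (t:ℝ)) h2'
      push_cast [Nat.cast_sub hn1] at hc
      linarith
    linear_combination hch / 4
  rw [pascal, hT]
  ring

/-- For every `N ≥ 1`, `m_{N+1} (-1)^N / Q_{N-1} = ∑_{n=2}^N (n 2^{1-n} - 1 + n(n-1)/4)/Q_{n-1}`. -/
theorem dst_poisson_coeff_summed
    (l : ℕ → ℝ)
    (h0 : l 0 = 0) (h1 : l 1 = 0) (h2 : l 2 = 0) (h3 : l 3 = 1/2)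
    (hrec : ∀ n : ℕ, 3 ≤ n →
      l (n+1) = 1 + (2:ℝ) ^ (1 - (n:ℤ)) * ∑ k ∈ Finset.range (n+1), (n.choose k : ℝ) * l k
        - (n : ℝ) * (2:ℝ) ^ (1 - (n:ℤ)))
    (m : ℕ → ℝ)
    (hm : ∀ n : ℕ, m n = ∑ k ∈ Finset.range (n+1), (n.choose k : ℝ) * (-1)^(n-k) * l k) :
    ∀ N : ℕ, 1 ≤ N →
      m (N+1) * (-1)^N / Q (N-1)
        = ∑ n ∈ Finset.Icc 2 N,
            ((n:ℝ) * (2:ℝ) ^ (1 - (n:ℤ)) - 1 + (n:ℝ) * ((n:ℝ) - 1) / 4) / Q (n-1) := by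
  have halt := dst_hm_alt l m hm
  -- key recurrence in terms of m
  have key : ∀ n : ℕ, 2 ≤ n →
      m (n+1) * (-1)^n
        = (1 - (2:ℝ) ^ (1 - (n:ℤ))) * (m n * (-1)^(n+1))
          + ((n:ℝ) * (2:ℝ) ^ (1 - (n:ℤ)) - 1 + (n:ℝ) * ((n:ℝ)-1) / 4) := by
    intro n hn
    have ha : ((-1:ℝ))^(n+1) * (-1)^n = -1 := by
      rw [← pow_add]
      exact Odd.neg_one_pow ⟨n, by ring⟩
    have hb : ((-1:ℝ))^n * (-1)^(n+1) = -1 := by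
      rw [← pow_add]
      exact Odd.neg_one_pow ⟨n, by ring⟩
    have E1 : m (n+1) * (-1:ℝ)^n
        = -(∑ k ∈ Finset.range (n+2), ((n+1).choose k : ℝ) * (-1)^k * l k) := by
      rw [halt (n+1)]
      calc ((-1:ℝ))^(n+1) * (∑ k ∈ Finset.range (n+1+1), ((n+1).choose k : ℝ) * (-1)^k * l k)
            * (-1)^n
          = ((-1:ℝ))^(n+1) * (-1)^n
            * (∑ k ∈ Finset.range (n+2), ((n+1).choose k : ℝ) * (-1)^k * l k) := by ring
        _ = -(∑ k ∈ Finset.range (n+2), ((n+1).choose k : ℝ) * (-1)^k * l k) := by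
            rw [ha]; ring
    have E2 : m n * (-1:ℝ)^(n+1)
        = -(∑ k ∈ Finset.range (n+1), (n.choose k : ℝ) * (-1)^k * l k) := by
      rw [halt n]
      calc ((-1:ℝ))^n * (∑ k ∈ Finset.range (n+1), (n.choose k : ℝ) * (-1)^k * l k)
            * (-1)^(n+1)
          = ((-1:ℝ))^n * (-1)^(n+1)
            * (∑ k ∈ Finset.range (n+1), (n.choose k : ℝ) * (-1)^k * l k) := by ring
        _ = -(∑ k ∈ Finset.range (n+1), (n.choose k : ℝ) * (-1)^k * l k) := by
            rw [hb]; ring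
    rw [E1, E2, dst_Mrec l h0 h1 h2 h3 hrec n hn]
    ring
  intro N hN
  induction N, hN using Nat.le_induction with
  | base =>
    have hm2 : m 2 = 0 := by
      rw [hm 2]
      norm_num [Finset.sum_range_succ, h0, h1, h2]
    rw [show (1:ℕ)+1 = 2 by norm_num, hm2,
      Finset.Icc_eq_empty (by omega : ¬ (2:ℕ) ≤ 1)]
    simp
  | succ N hN ih =>
    simp only [Nat.add_sub_cancel] at ih ⊢
    rw [Finset.sum_Icc_succ_top (by omega : 2 ≤ N+1), ← ih]
    simp only [Nat.add_sub_cancel]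
    have hkey := key (N+1) (by omega)
    have hp2 : ((-1:ℝ))^(N+1+1) = (-1:ℝ)^N := by
      rw [pow_succ, pow_succ]; ring
    rw [hp2] at hkey
    have hexp : (1:ℤ) - ((N+1:ℕ):ℤ) = -(N:ℤ) := by push_cast; ring
    rw [hexp] at hkey ⊢
    have hQ : Q N = Q (N-1) * (1 - (2:ℝ) ^ (-(N:ℤ))) := by
      obtain ⟨P, rfl⟩ : ∃ P, N = P + 1 := ⟨N-1, by omega⟩
      have := dst_Q_succ P
      simpa using this
    have hQP : Q (N-1) ≠ 0 := ne_of_gt (dst_Q_pos (N-1))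
    have hfac : (1 : ℝ) - (2:ℝ) ^ (-(N:ℤ)) ≠ 0 :=
      ne_of_gt (dst_one_sub_pos N (by omega))
    rw [hkey, hQ]
    generalize (2:ℝ)^(-(N:ℤ)) = a at hfac ⊢
    field_simp
end

section
/- For every integer N ≥ 2, one has the closed form m_N = Q_{N-2}·(−1)^N · ∑_{n=1}^{N-2} (1 − (n+1)·2^{-n} − n(n+1)/4)/Q_n. -/
open Finset

private lemma hz2 : ∀ i : ℕ, (2:ℝ) ^ (-(i:ℤ)) = (2⁻¹:ℝ)^i := by
  intro i
  rw [zpow_neg, zpow_natCast, ← inv_pow]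

private lemma hz1 : ∀ i : ℕ, (2:ℝ) ^ (1-(i:ℤ)) = 2 * (2⁻¹:ℝ)^i := by
  intro i
  rw [show (1 - (i:ℤ)) = 1 + (-(i:ℤ)) by ring, zpow_add₀ (two_ne_zero), zpow_one, hz2]

private lemma sum_i_choose_pow (x y : ℝ) (n : ℕ) :
    ∑ i ∈ range (n+1), (i:ℝ) * (n.choose i : ℝ) * (x^i * y^(n-i))
      = n * x * (x+y)^(n-1) := by
  cases n with
  | zero => simp
  | succ m =>
    rw [Finset.sum_range_succ']
    simp only [Nat.cast_zero, zero_mul, add_zero]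
    have h : ∀ j : ℕ, (((j:ℕ)+1:ℕ):ℝ) * ((m+1).choose (j+1) : ℝ) = ((m:ℝ)+1) * (m.choose j : ℝ) := by
      intro j
      have h1 := Nat.add_one_mul_choose_eq m j
      have h2 : ((m.succ * m.choose j : ℕ) : ℝ) = (((m+1).choose (j+1) * (j+1) : ℕ) : ℝ) := by
        rw [h1]
      push_cast at h2
      push_cast
      linarith
    calc ∑ j ∈ range (m+1), ((j+1:ℕ):ℝ) * ((m+1).choose (j+1) : ℝ) * (x^(j+1) * y^(m+1-(j+1)))
        = ∑ j ∈ range (m+1), ((m:ℝ)+1) * x * ((m.choose j : ℝ) * (x^j * y^(m-j))) := by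
          apply Finset.sum_congr rfl
          intro j hj
          rw [h j]
          have hy : m + 1 - (j+1) = m - j := by omega
          rw [hy]
          ring
      _ = ((m:ℝ)+1) * x * ∑ j ∈ range (m+1), (m.choose j : ℝ) * (x^j * y^(m-j)) := by
          rw [Finset.mul_sum]
      _ = ((m+1:ℕ):ℝ) * x * (x+y)^(m+1-1) := by
          have hb : ∑ j ∈ range (m+1), (m.choose j : ℝ) * (x^j * y^(m-j)) = (x+y)^m := by
            rw [add_pow x y m]
            apply Finset.sum_congr rfl
            intro j hj; ring
          rw [hb]
          push_cast; ring_nf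

private lemma sum_choose_choose (n k : ℕ) (hk : k ≤ n) :
    ∑ i ∈ range (n+1), (n.choose i : ℝ) * (i.choose k : ℝ) * ((-1:ℝ)^(n-i) * (2⁻¹:ℝ)^i)
      = (n.choose k : ℝ) * ((-1:ℝ)^(n-k) * (2⁻¹:ℝ)^n) := by
  have hsplit : ∑ i ∈ Ico 0 (n+1), (n.choose i : ℝ) * (i.choose k : ℝ) * ((-1:ℝ)^(n-i) * (2⁻¹:ℝ)^i)
      = (∑ i ∈ Ico 0 k, (n.choose i : ℝ) * (i.choose k : ℝ) * ((-1:ℝ)^(n-i) * (2⁻¹:ℝ)^i))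
      + ∑ i ∈ Ico k (n+1), (n.choose i : ℝ) * (i.choose k : ℝ) * ((-1:ℝ)^(n-i) * (2⁻¹:ℝ)^i) :=
    (Finset.sum_Ico_consecutive _ (Nat.zero_le k) (by omega)).symm
  rw [← Finset.range_eq_Ico] at *
  simp only [← Finset.range_eq_Ico] at hsplit
  rw [hsplit]
  have h1 : ∑ i ∈ range k, (n.choose i : ℝ) * (i.choose k : ℝ) * ((-1:ℝ)^(n-i) * (2⁻¹:ℝ)^i) = 0 := by
    apply Finset.sum_eq_zero
    intro i hi
    rw [Finset.mem_range] at hi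
    rw [Nat.choose_eq_zero_of_lt hi]
    simp
  rw [h1, zero_add, Finset.sum_Ico_eq_sum_range]
  have hnk : n + 1 - k = (n - k) + 1 := by omega
  rw [hnk]
  have hterm : ∀ j ∈ range (n-k+1),
      (n.choose (k+j) : ℝ) * ((k+j).choose k : ℝ) * ((-1:ℝ)^(n-(k+j)) * (2⁻¹:ℝ)^(k+j))
      = (n.choose k : ℝ) * (2⁻¹:ℝ)^k * ((2⁻¹:ℝ)^j * (-1:ℝ)^((n-k)-j) * ((n-k).choose j : ℝ)) := by
    intro j hj
    rw [Finset.mem_range] at hj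
    have hle1 : k ≤ k + j := Nat.le_add_right k j
    have hle2 : k + j ≤ n := by omega
    have hcc := Nat.choose_mul (n := n) hle1
    have hcast : (n.choose (k+j) : ℝ) * ((k+j).choose k : ℝ) = (n.choose k : ℝ) * ((n-k).choose (k+j-k) : ℝ) := by
      exact_mod_cast congrArg (Nat.cast : ℕ → ℝ) hcc
    have hj2 : k + j - k = j := by omega
    rw [hj2] at hcast
    rw [hcast]
    have he : n - (k+j) = (n-k) - j := by omega
    rw [he, pow_add]
    ring
  rw [Finset.sum_congr rfl hterm, ← Finset.mul_sum]
  have hb : ∑ j ∈ range (n-k+1), (2⁻¹:ℝ)^j * (-1:ℝ)^((n-k)-j) * ((n-k).choose j : ℝ)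
      = ((2⁻¹:ℝ) + (-1))^(n-k) := by
    rw [add_pow]
  rw [hb]
  have h2 : ((2⁻¹:ℝ) + (-1)) = (-1) * (2⁻¹:ℝ) := by norm_num
  rw [h2, mul_pow]
  have hpk : (2⁻¹:ℝ)^k * (2⁻¹:ℝ)^(n-k) = (2⁻¹:ℝ)^n := by
    rw [← pow_add]
    congr 1
    omega
  calc (n.choose k : ℝ) * (2⁻¹:ℝ)^k * ((-1:ℝ)^(n-k) * (2⁻¹:ℝ)^(n-k))
      = (n.choose k : ℝ) * ((-1:ℝ)^(n-k) * ((2⁻¹:ℝ)^k * (2⁻¹:ℝ)^(n-k))) := by ring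
    _ = _ := by rw [hpk]

private lemma neg_half_pow (q : ℕ) (hq : 1 ≤ q) :
    ((2⁻¹:ℝ) + (-1))^(q-1) = -((-1:ℝ)^q * 2 * (2⁻¹:ℝ)^q) := by
  obtain ⟨p, rfl⟩ : ∃ p, q = p+1 := ⟨q-1, by omega⟩
  have : ((2⁻¹:ℝ) + (-1)) = (-1) * (2⁻¹:ℝ) := by norm_num
  rw [Nat.add_sub_cancel, this, mul_pow, pow_succ, pow_succ]
  ring

/-- For every `N ≥ 2`, the closed form
`m_N = Q_{N-2} (-1)^N ∑_{n=1}^{N-2} (1 - (n+1)2^{-n} - n(n+1)/4)/Q_n`. -/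
theorem dst_poisson_coeff_closed_form
    (l : ℕ → ℝ)
    (h0 : l 0 = 0) (h1 : l 1 = 0) (h2 : l 2 = 0) (h3 : l 3 = 1/2)
    (hrec : ∀ n : ℕ, 3 ≤ n →
      l (n+1) = 1 + (2:ℝ) ^ (1 - (n:ℤ)) * ∑ k ∈ Finset.range (n+1), (n.choose k : ℝ) * l k
        - (n : ℝ) * (2:ℝ) ^ (1 - (n:ℤ)))
    (m : ℕ → ℝ)
    (hm : ∀ n : ℕ, m n = ∑ k ∈ Finset.range (n+1), (n.choose k : ℝ) * (-1)^(n-k) * l k) :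
    ∀ N : ℕ, 2 ≤ N →
      m N = Q (N-2) * (-1)^N *
        ∑ n ∈ Finset.Icc 1 (N-2),
          (1 - ((n:ℝ)+1) * (2:ℝ) ^ (-(n:ℤ)) - (n:ℝ) * ((n:ℝ)+1) / 4) / Q n := by
  -- l (i+1) in terms of a uniform formula plus a correction
  have hl : ∀ i : ℕ, l (i+1) = (1 + 2*(2⁻¹:ℝ)^i * (∑ k ∈ range (i+1), (i.choose k : ℝ) * l k)
      - (i:ℝ)*(2*(2⁻¹:ℝ)^i)) + (if i = 0 then (-1:ℝ) else if i = 2 then 1/2 else 0) := by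
    intro i
    match i with
    | 0 => simp [Finset.sum_range_succ, h0, h1]
    | 1 => norm_num [Finset.sum_range_succ, h0, h1, h2]
    | 2 => norm_num [Finset.sum_range_succ, h0, h1, h2, h3]
    | (j+3) =>
      rw [hrec (j+3) (by omega), hz1]
      have e1 : (j+3 ≠ 0) := by omega
      have e2 : (j+3 ≠ 2) := by omega
      simp [e1, e2]
  -- the first-order recurrence for m
  have hmrec : ∀ n : ℕ, 3 ≤ n → m (n+1) = (2*(2⁻¹:ℝ)^n - 1) * m n
      + (-1:ℝ)^n * (2*(n:ℝ)*(2⁻¹:ℝ)^n - 1 + (n:ℝ)*((n:ℝ)-1)/4) := by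
    intro n hn
    -- Step A : Pascal
    have stepA : m (n+1) = -m n + ∑ i ∈ range (n+1), (n.choose i : ℝ) * (-1:ℝ)^(n-i) * l (i+1) := by
      rw [hm (n+1), Finset.sum_range_succ']
      have hg0 : ((n+1).choose 0 : ℝ) * (-1:ℝ)^(n+1-0) * l 0 = 0 := by rw [h0]; ring
      rw [hg0, add_zero]
      have hmn : m n = ∑ i ∈ range n, (n.choose (i+1) : ℝ) * (-1:ℝ)^(n-(i+1)) * l (i+1) := by
        rw [hm n, Finset.sum_range_succ']
        rw [h0]
        simp
      have hsplit : ∀ i ∈ range (n+1),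
          ((n+1).choose (i+1) : ℝ) * (-1:ℝ)^(n+1-(i+1)) * l (i+1)
          = (n.choose i : ℝ) * (-1:ℝ)^(n-i) * l (i+1)
            + (n.choose (i+1) : ℝ) * (-1:ℝ)^(n-i) * l (i+1) := by
        intro i hi
        have hp : (n+1).choose (i+1) = n.choose i + n.choose (i+1) := Nat.choose_succ_succ n i
        have he : n + 1 - (i+1) = n - i := by omega
        rw [hp, he]
        push_cast
        ring
      rw [Finset.sum_congr rfl hsplit, Finset.sum_add_distrib]
      have hsecond : ∑ i ∈ range (n+1), (n.choose (i+1) : ℝ) * (-1:ℝ)^(n-i) * l (i+1) = -m n := by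
        rw [Finset.sum_range_succ]
        rw [Nat.choose_succ_self]
        rw [hmn, ← Finset.sum_neg_distrib]
        simp only [Nat.cast_zero, zero_mul, add_zero]
        apply Finset.sum_congr rfl
        intro i hi
        rw [Finset.mem_range] at hi
        have he : n - i = (n - (i+1)) + 1 := by omega
        rw [he, pow_succ]
        ring
      rw [hsecond]
      ring
    -- Step B : substitute the l recurrence
    have hexp : ∀ i ∈ range (n+1), (n.choose i : ℝ) * (-1:ℝ)^(n-i) * l (i+1)
        = ((1:ℝ)^i * (-1:ℝ)^(n-i) * (n.choose i : ℝ)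
          + 2*((n.choose i : ℝ) * (-1:ℝ)^(n-i) * ((2⁻¹:ℝ)^i * ∑ k ∈ range (i+1), (i.choose k : ℝ) * l k)))
          - 2*((i:ℝ) * (n.choose i : ℝ) * ((2⁻¹:ℝ)^i * (-1:ℝ)^(n-i)))
          + (n.choose i : ℝ) * (-1:ℝ)^(n-i) * (if i = 0 then (-1:ℝ) else if i = 2 then 1/2 else 0) := by
      intro i hi
      rw [hl i]
      ring
    have hB1 : ∑ i ∈ range (n+1), (1:ℝ)^i * (-1:ℝ)^(n-i) * (n.choose i : ℝ) = 0 := by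
      rw [← add_pow]
      rw [show ((1:ℝ) + (-1)) = 0 by norm_num, zero_pow (by omega : n ≠ 0)]
    have hB2 : ∑ i ∈ range (n+1), (n.choose i : ℝ) * (-1:ℝ)^(n-i) * ((2⁻¹:ℝ)^i *
        ∑ k ∈ range (i+1), (i.choose k : ℝ) * l k) = (2⁻¹:ℝ)^n * m n := by
      have hext : ∀ i ∈ range (n+1),
          (n.choose i : ℝ) * (-1:ℝ)^(n-i) * ((2⁻¹:ℝ)^i * ∑ k ∈ range (i+1), (i.choose k : ℝ) * l k)
          = ∑ k ∈ range (n+1), (n.choose i : ℝ) * (i.choose k : ℝ) * ((-1:ℝ)^(n-i) * (2⁻¹:ℝ)^i) * l k := by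
        intro i hi
        rw [Finset.mem_range] at hi
        have hsub : ∑ k ∈ range (i+1), (i.choose k : ℝ) * l k
            = ∑ k ∈ range (n+1), (i.choose k : ℝ) * l k := by
          apply Finset.sum_subset
          · intro x hx; rw [Finset.mem_range] at *; omega
          · intro x hx hx2
            rw [Finset.mem_range] at *
            rw [Nat.choose_eq_zero_of_lt (by omega)]
            simp
        rw [hsub, Finset.mul_sum, Finset.mul_sum]
        apply Finset.sum_congr rfl
        intro k hk
        ring
      rw [Finset.sum_congr rfl hext, Finset.sum_comm]
      rw [hm n, Finset.mul_sum]
      apply Finset.sum_congr rfl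
      intro k hk
      rw [Finset.mem_range] at hk
      have hscc := sum_choose_choose n k (by omega)
      calc ∑ i ∈ range (n+1), (n.choose i : ℝ) * (i.choose k : ℝ) * ((-1:ℝ)^(n-i) * (2⁻¹:ℝ)^i) * l k
          = (∑ i ∈ range (n+1), (n.choose i : ℝ) * (i.choose k : ℝ) * ((-1:ℝ)^(n-i) * (2⁻¹:ℝ)^i)) * l k := by
            rw [Finset.sum_mul]
        _ = (n.choose k : ℝ) * ((-1:ℝ)^(n-k) * (2⁻¹:ℝ)^n) * l k := by rw [hscc]
        _ = (2⁻¹:ℝ)^n * ((n.choose k : ℝ) * (-1:ℝ)^(n-k) * l k) := by ring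
    have hB3 : ∑ i ∈ range (n+1), (i:ℝ) * (n.choose i : ℝ) * ((2⁻¹:ℝ)^i * (-1:ℝ)^(n-i))
        = (n:ℝ) * 2⁻¹ * (-((-1:ℝ)^n * 2 * (2⁻¹:ℝ)^n)) := by
      rw [sum_i_choose_pow (2⁻¹:ℝ) (-1) n, neg_half_pow n (by omega)]
    have hB4 : ∑ i ∈ range (n+1), (n.choose i:ℝ)*(-1:ℝ)^(n-i)
        * (if i = 0 then (-1:ℝ) else if i = 2 then 1/2 else 0)
        = (-1:ℝ)^n * ((n:ℝ)*((n:ℝ)-1)/4 - 1) := by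
      have hterm : ∀ i ∈ range (n+1), (n.choose i:ℝ)*(-1:ℝ)^(n-i)
          * (if i = 0 then (-1:ℝ) else if i = 2 then 1/2 else 0)
          = (if i = 0 then -(-1:ℝ)^(n-0) else 0) + (if i = 2 then (n.choose 2:ℝ)*(-1:ℝ)^(n-2)/2 else 0) := by
        intro i _
        by_cases hi1 : i = 0
        · subst hi1; norm_num
        · by_cases hi2 : i = 2
          · subst hi2; simp [hi1]; ring
          · simp [hi1, hi2]
      rw [Finset.sum_congr rfl hterm, Finset.sum_add_distrib,
        Finset.sum_ite_eq' (range (n+1)) 0, Finset.sum_ite_eq' (range (n+1)) 2]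
      have h0m : (0:ℕ) ∈ range (n+1) := by simp
      have h2m : (2:ℕ) ∈ range (n+1) := by simp; omega
      rw [if_pos h0m, if_pos h2m]
      have hpw : (-1:ℝ)^(n-2) = (-1:ℝ)^n := by
        conv_rhs => rw [show n = n-2+2 by omega]
        rw [pow_add]; norm_num
      rw [hpw, Nat.cast_choose_two, Nat.sub_zero]
      ring
    rw [stepA, Finset.sum_congr rfl hexp]
    rw [Finset.sum_add_distrib, Finset.sum_sub_distrib, Finset.sum_add_distrib]
    rw [← Finset.mul_sum, ← Finset.mul_sum]
    rw [hB1, hB2, hB3, hB4]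
    ring
  -- base values
  have hm2 : m 2 = 0 := by
    rw [hm 2]
    norm_num [Finset.sum_range_succ, h0, h1, h2]
  have hm3 : m 3 = 1/2 := by
    rw [hm 3]
    norm_num [Finset.sum_range_succ, h0, h1, h2, h3]
  -- Q facts
  have hQpos : ∀ k : ℕ, 0 < Q k := by
    intro k
    apply Finset.prod_pos
    intro j hj
    rw [Finset.mem_Icc] at hj
    rw [hz2]
    have : (2⁻¹:ℝ)^j < 1 := pow_lt_one₀ (by norm_num) (by norm_num) (by omega)
    linarith
  have hQsucc : ∀ k : ℕ, Q (k+1) = Q k * (1 - (2⁻¹:ℝ)^(k+1)) := by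
    intro k
    unfold Q
    rw [Finset.prod_Icc_succ_top (by omega : 1 ≤ k+1), hz2]
  -- the main claim, reindexed
  have claim : ∀ M : ℕ, m (M+2) = Q M * (-1:ℝ)^(M+2) *
      ∑ n ∈ Finset.Icc 1 M,
        (1 - ((n:ℝ)+1) * (2:ℝ) ^ (-(n:ℤ)) - (n:ℝ) * ((n:ℝ)+1) / 4) / Q n := by
    intro M
    induction M with
    | zero => simpa using hm2
    | succ p ih =>
      match p, ih with
      | 0, _ =>
        rw [show (0:ℕ)+1+2 = 3 by rfl, hm3]
        rw [show Finset.Icc 1 1 = {1} from rfl, Finset.sum_singleton]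
        have hq1 : Q 1 = 1/2 := by
          rw [hQsucc 0]
          unfold Q
          norm_num
        rw [hq1]
        norm_num
      | (p+1), ih =>
        set M := p + 1 with hM
        have h3M : 3 ≤ M + 2 := by omega
        have hq : Q (M+1) = Q M * (1 - 2*(2⁻¹:ℝ)^(M+2)) := by
          rw [hQsucc M, pow_succ]
          ring
        have hzz : (2:ℝ) ^ (-((M+1:ℕ):ℤ)) = 2*(2⁻¹:ℝ)^(M+2) := by
          rw [hz2, pow_succ, pow_succ]
          ring
        rw [show M+1+2 = (M+2)+1 by omega, hmrec (M+2) h3M]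
        rw [Finset.sum_Icc_succ_top (by omega : 1 ≤ M+1)]
        rw [ih, pow_succ (-1:ℝ) (M+2), hzz, hq]
        have hQMne : Q M ≠ 0 := ne_of_gt (hQpos M)
        have hxlt : 2*(2⁻¹:ℝ)^(M+2) < 1 := by
          have hp1 : (2⁻¹:ℝ)^(M+1) < 1 := pow_lt_one₀ (by norm_num) (by norm_num) (by omega)
          have : 2*(2⁻¹:ℝ)^(M+2) = (2⁻¹:ℝ)^(M+1) := by
            rw [pow_succ]; ring
          linarith [this ▸ hp1]
        have hxne : (1 - 2*(2⁻¹:ℝ)^(M+2)) ≠ 0 := by linarith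
        have hne : Q M * (1 - 2*(2⁻¹:ℝ)^(M+2)) ≠ 0 := mul_ne_zero hQMne hxne
        have hcancel := mul_div_cancel₀
          (1 - (((M+1:ℕ):ℝ)+1) * (2*(2⁻¹:ℝ)^(M+2)) - ((M+1:ℕ):ℝ) * (((M+1:ℕ):ℝ)+1) / 4) hne
        push_cast at hcancel ⊢
        linear_combination ((-1:ℝ)^(M+2)) * hcancel
  intro N hN
  obtain ⟨M, rfl⟩ : ∃ M, N = M + 2 := ⟨N-2, by omega⟩
  rw [show M+2-2 = M by omega]
  exact claim M
end
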